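/- arXiv:1206.1196 — 3 statements merged into one kernel-verified Lean document; each statement's English description precedes it below -/
import Mathlib

section
/- Let ψ^t be a flow (one-parameter group of homeomorphisms) on (0,1) such that ψ^t is fixed-point free for all t ≠ 0, let α : ℝ → ℝ be an additive group homomorphism, and let U ⊆ (0,1) be a nonempty open set whose closure is contained in (0,1). Then α is continuous if and only if there exists δ > 0 such that ψ^{α(t)}(U) ∩ U ≠ ∅ for all |t| < δ. -/
open Set Filter

private lemma flow_inj (φ : ℝ → ↥(Set.Ioo (0:ℝ) 1) → ↥(Set.Ioo (0:ℝ) 1))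
    (hadd : ∀ s t x, φ (s + t) x = φ s (φ t x))
    (hfree : ∀ t : ℝ, t ≠ 0 → ∀ x, φ t x ≠ x) (x : ↥(Set.Ioo (0:ℝ) 1)) :
    Function.Injective (fun t => ((φ t x : ℝ))) := by
  intro s t h
  have h' : φ s x = φ t x := Subtype.ext h
  by_contra hst
  have h2 : φ (s - t) (φ t x) = φ t x := by
    rw [← hadd, sub_add_cancel, h']
  exact hfree (s - t) (sub_ne_zero.mpr hst) _ h2

private lemma flow_mono (φ : ℝ → ↥(Set.Ioo (0:ℝ) 1) → ↥(Set.Ioo (0:ℝ) 1))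
    (hcont : Continuous (fun p : ℝ × ↥(Set.Ioo (0:ℝ) 1) => φ p.1 p.2))
    (hzero : ∀ x, φ 0 x = x)
    (hadd : ∀ s t x, φ (s + t) x = φ s (φ t x))
    (hfree : ∀ t : ℝ, t ≠ 0 → ∀ x, φ t x ≠ x)
    (hpos : ∀ x : ↥(Set.Ioo (0:ℝ) 1), ((x:ℝ)) < ((φ 1 x : ℝ))) (x : ↥(Set.Ioo (0:ℝ) 1)) :
    StrictMono (fun t => ((φ t x : ℝ))) := by
  have hc : Continuous (fun t => ((φ t x : ℝ))) :=
    continuous_subtype_val.comp (hcont.comp (continuous_id.prodMk continuous_const))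
  rcases hc.strictMono_of_inj (flow_inj φ hadd hfree x) with h | h
  · exact h
  · exfalso
    have h1 := h (show (0:ℝ) < 1 by norm_num)
    simp only [hzero] at h1
    exact absurd (hpos x) (not_lt.mpr h1.le)

private lemma flow_escape (φ : ℝ → ↥(Set.Ioo (0:ℝ) 1) → ↥(Set.Ioo (0:ℝ) 1))
    (hcont : Continuous (fun p : ℝ × ↥(Set.Ioo (0:ℝ) 1) => φ p.1 p.2))
    (hzero : ∀ x, φ 0 x = x)
    (hadd : ∀ s t x, φ (s + t) x = φ s (φ t x))
    (hfree : ∀ t : ℝ, t ≠ 0 → ∀ x, φ t x ≠ x)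
    (hpos : ∀ x : ↥(Set.Ioo (0:ℝ) 1), ((x:ℝ)) < ((φ 1 x : ℝ))) (a b : ℝ) (ha : 0 < a) (hb : b < 1) :
    ∃ N : ℝ, 0 ≤ N ∧ ∀ s : ℝ, N ≤ s → ∀ x : ↥(Set.Ioo (0:ℝ) 1), a ≤ (x:ℝ) → b < (φ s x : ℝ) := by
  have mono := flow_mono φ hcont hzero hadd hfree hpos
  have ge_self : ∀ (s : ℝ), 0 ≤ s → ∀ x : ↥(Set.Ioo (0:ℝ) 1), (x:ℝ) ≤ (φ s x : ℝ) := by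
    intro s hs x
    have := (mono x).le_iff_le.mpr hs
    simpa [hzero] using this
  by_cases hab : a ≤ b
  · -- main case
    set K : Set ↥(Set.Ioo (0:ℝ) 1) := Subtype.val ⁻¹' (Icc a b) with hK
    have hIccsub : Icc a b ⊆ Set.Ioo (0:ℝ) 1 := fun z hz => ⟨lt_of_lt_of_le ha hz.1, lt_of_le_of_lt hz.2 hb⟩
    have hKc : IsCompact K := by
      rw [Subtype.isCompact_iff]
      have : Subtype.val '' K = Icc a b := by
        rw [hK, Subtype.image_preimage_coe, inter_eq_right.mpr hIccsub]
      rw [this]; exact isCompact_Icc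
    have hKne : K.Nonempty := ⟨⟨a, hIccsub ⟨le_refl a, hab⟩⟩, by simp [hK, hab]⟩
    have hfc : Continuous (fun x : ↥(Set.Ioo (0:ℝ) 1) => (φ 1 x : ℝ) - (x:ℝ)) := by
      exact (continuous_subtype_val.comp (hcont.comp (continuous_const.prodMk continuous_id))).sub continuous_subtype_val
    obtain ⟨x₀, hx₀K, hx₀min⟩ := hKc.exists_isMinOn hKne hfc.continuousOn
    set ε : ℝ := (φ 1 x₀ : ℝ) - (x₀:ℝ) with hε
    have hεpos : 0 < ε := sub_pos.mpr (hpos x₀)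
    have step : ∀ y : ↥(Set.Ioo (0:ℝ) 1), a ≤ (y:ℝ) → (y:ℝ) ≤ b → (y:ℝ) + ε ≤ (φ 1 y : ℝ) := by
      intro y h1 h2
      have := isMinOn_iff.mp hx₀min y ⟨h1, h2⟩
      linarith
    have claim : ∀ n : ℕ, ∀ x : ↥(Set.Ioo (0:ℝ) 1), a ≤ (x:ℝ) →
        b < (φ n x : ℝ) ∨ a + n * ε ≤ (φ n x : ℝ) := by
      intro n
      induction n with
      | zero => intro x hx; right; simp [hzero]; linarith
      | succ n ih =>
        intro x hx
        have hsplit : φ ((n + 1 : ℕ) : ℝ) x = φ 1 (φ n x) := by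
          push_cast
          rw [add_comm, hadd]
        rcases ih x hx with h | h
        · left
          rw [hsplit]
          exact lt_trans h (hpos _)
        · have hge : a ≤ (φ n x : ℝ) := by nlinarith [n.cast_nonneg (α := ℝ)]
          by_cases hble : (φ n x : ℝ) ≤ b
          · right
            rw [hsplit]
            have := step (φ n x) hge hble
            push_cast
            linarith
          · left
            rw [hsplit]
            push_neg at hble
            exact lt_trans hble (hpos _)
    obtain ⟨n, hn⟩ := exists_nat_gt ((b - a) / ε)
    have hnb : b < a + n * ε := by
      rw [div_lt_iff₀ hεpos] at hn
      linarith
    refine ⟨n, n.cast_nonneg, fun s hs x hx => ?_⟩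
    have hb' : b < (φ n x : ℝ) := by
      rcases claim n x hx with h | h
      · exact h
      · linarith
    have : φ s x = φ (s - n) (φ n x) := by rw [← hadd, sub_add_cancel]
    rw [this]
    exact lt_of_lt_of_le hb' (ge_self (s - n) (by linarith) _)
  · -- a > b : trivial
    push_neg at hab
    exact ⟨0, le_refl 0, fun s hs x hx =>
      lt_of_lt_of_le (lt_of_lt_of_le hab hx) (ge_self s hs x)⟩

private lemma flow_disjoint (φ : ℝ → ↥(Set.Ioo (0:ℝ) 1) → ↥(Set.Ioo (0:ℝ) 1))
    (hcont : Continuous (fun p : ℝ × ↥(Set.Ioo (0:ℝ) 1) => φ p.1 p.2))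
    (hzero : ∀ x, φ 0 x = x)
    (hadd : ∀ s t x, φ (s + t) x = φ s (φ t x))
    (hfree : ∀ t : ℝ, t ≠ 0 → ∀ x, φ t x ≠ x)
    (hpos : ∀ x : ↥(Set.Ioo (0:ℝ) 1), ((x:ℝ)) < ((φ 1 x : ℝ)))
    (U : Set ↥(Set.Ioo (0:ℝ) 1)) (a b : ℝ) (ha : 0 < a) (hb : b < 1)
    (hU : ∀ x ∈ U, a ≤ (x:ℝ) ∧ (x:ℝ) ≤ b) :
    ∃ N : ℝ, 0 ≤ N ∧ ∀ s : ℝ, N ≤ |s| → (φ s '' U ∩ U) = ∅ := by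
  obtain ⟨N, hN0, hN⟩ := flow_escape φ hcont hzero hadd hfree hpos a b ha hb
  refine ⟨N, hN0, fun s hs => ?_⟩
  rw [Set.eq_empty_iff_forall_notMem]
  rintro y ⟨⟨u, huU, rfl⟩, hyU⟩
  rcases le_total 0 s with h0 | h0
  · have : N ≤ s := by rwa [abs_of_nonneg h0] at hs
    have := hN s this u (hU u huU).1
    have := (hU _ hyU).2
    linarith
  · have hNs : N ≤ -s := by rwa [abs_of_nonpos h0] at hs
    have hback : φ (-s) (φ s u) = u := by rw [← hadd, neg_add_cancel, hzero]
    have h1 := hN (-s) hNs (φ s u) (hU _ hyU).1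
    rw [hback] at h1
    have := (hU u huU).2
    linarith

private lemma flow_dichotomy (φ : ℝ → ↥(Set.Ioo (0:ℝ) 1) → ↥(Set.Ioo (0:ℝ) 1))
    (hcont : Continuous (fun p : ℝ × ↥(Set.Ioo (0:ℝ) 1) => φ p.1 p.2))
    (hfree : ∀ t : ℝ, t ≠ 0 → ∀ x, φ t x ≠ x) :
    (∀ x : ↥(Set.Ioo (0:ℝ) 1), (x:ℝ) < (φ 1 x : ℝ)) ∨
    (∀ x : ↥(Set.Ioo (0:ℝ) 1), (φ 1 x : ℝ) < (x:ℝ)) := by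
  haveI : ConnectedSpace ↥(Set.Ioo (0:ℝ) 1) :=
    Subtype.connectedSpace (isConnected_Ioo (by norm_num))
  have hne : ∀ x : ↥(Set.Ioo (0:ℝ) 1), (φ 1 x : ℝ) ≠ (x:ℝ) := fun x h =>
    hfree 1 one_ne_zero x (Subtype.ext h)
  by_contra h
  rw [not_or] at h
  obtain ⟨hA, hB⟩ := h
  push_neg at hA hB
  obtain ⟨x, hx⟩ := hA
  obtain ⟨y, hy⟩ := hB
  have hx' : (φ 1 x : ℝ) < (x:ℝ) := lt_of_le_of_ne hx (hne x)
  have hy' : (y:ℝ) < (φ 1 y : ℝ) := lt_of_le_of_ne hy (fun h => hne y h.symm)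
  set f : ↥(Set.Ioo (0:ℝ) 1) → ℝ := fun z => (φ 1 z : ℝ) - (z:ℝ) with hf
  have hfc : Continuous f :=
    (continuous_subtype_val.comp (hcont.comp (continuous_const.prodMk continuous_id))).sub
      continuous_subtype_val
  have h0 : (0:ℝ) ∈ Set.Icc (f x) (f y) := ⟨sub_nonpos.mpr hx'.le, sub_nonneg.mpr hy'.le⟩
  obtain ⟨z, hz⟩ := intermediate_value_univ x y hfc h0
  exact hne z (by simp [hf] at hz; linarith)

/-- Continuity criterion (Lemma 3.4): for a fixed-point-free flow ψ on (0,1), an additive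
homomorphism α : ℝ → ℝ, and a nonempty open set U bounded away from the endpoints,
α is continuous iff ψ^{α(t)}(U) meets U for all sufficiently small |t|. -/
theorem continuity_criterion
    (φ : ℝ → ↥(Set.Ioo (0:ℝ) 1) → ↥(Set.Ioo (0:ℝ) 1))
    (hcont : Continuous (fun p : ℝ × ↥(Set.Ioo (0:ℝ) 1) => φ p.1 p.2))
    (hzero : ∀ x, φ 0 x = x)
    (hadd : ∀ s t x, φ (s + t) x = φ s (φ t x))
    (hfree : ∀ t : ℝ, t ≠ 0 → ∀ x, φ t x ≠ x)
    (α : ℝ → ℝ) (hα : ∀ s t, α (s + t) = α s + α t)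
    (U : Set ↥(Set.Ioo (0:ℝ) 1)) (hUo : IsOpen U) (hUne : U.Nonempty)
    (hUbd : ∃ a b : ℝ, 0 < a ∧ b < 1 ∧ ∀ x ∈ U, a ≤ (x:ℝ) ∧ (x:ℝ) ≤ b) :
    Continuous α ↔ ∃ δ > 0, ∀ t : ℝ, |t| < δ → (φ (α t) '' U ∩ U).Nonempty := by
  have hα0 : α 0 = 0 := by have := hα 0 0; simpa using this
  constructor
  · intro hc
    obtain ⟨x₀, hx₀⟩ := hUne
    have hg : Continuous fun t => φ (α t) x₀ :=
      hcont.comp (hc.prodMk continuous_const)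
    have hg0 : φ (α 0) x₀ = x₀ := by rw [hα0, hzero]
    have hmem : (fun t => φ (α t) x₀) ⁻¹' U ∈ nhds (0:ℝ) :=
      hg.continuousAt.preimage_mem_nhds (by rw [hg0]; exact hUo.mem_nhds hx₀)
    obtain ⟨δ, hδ, hball⟩ := Metric.mem_nhds_iff.mp hmem
    exact ⟨δ, hδ, fun t ht =>
      ⟨φ (α t) x₀, ⟨x₀, hx₀, rfl⟩, hball (by simpa [Real.dist_eq] using ht)⟩⟩
  · rintro ⟨δ, hδ, hmeets⟩
    obtain ⟨a, b, ha, hb, hU⟩ := hUbd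
    -- disjointness for large |s|, in both direction cases
    have hdisj : ∃ N : ℝ, 0 ≤ N ∧ ∀ s : ℝ, N ≤ |s| → (φ s '' U ∩ U) = ∅ := by
      rcases flow_dichotomy φ hcont hfree with hpos | hneg
      · exact flow_disjoint φ hcont hzero hadd hfree hpos U a b ha hb hU
      · -- reversed flow
        set ψ : ℝ → ↥(Set.Ioo (0:ℝ) 1) → ↥(Set.Ioo (0:ℝ) 1) := fun t x => φ (-t) x with hψ
        have hcont' : Continuous (fun p : ℝ × ↥(Set.Ioo (0:ℝ) 1) => ψ p.1 p.2) :=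
          hcont.comp ((continuous_neg.comp continuous_fst).prodMk continuous_snd)
        have hzero' : ∀ x, ψ 0 x = x := by intro x; simp [hψ, hzero]
        have hadd' : ∀ s t x, ψ (s + t) x = ψ s (ψ t x) := by
          intro s t x; simp only [hψ, neg_add]; rw [hadd]
        have hfree' : ∀ t : ℝ, t ≠ 0 → ∀ x, ψ t x ≠ x := fun t ht x =>
          hfree (-t) (neg_ne_zero.mpr ht) x
        have hpos' : ∀ x : ↥(Set.Ioo (0:ℝ) 1), (x:ℝ) < ((ψ 1 x : ℝ)) := by
          intro x
          have h1 := hneg (φ (-1) x)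
          have h2 : φ 1 (φ (-1) x) = x := by rw [← hadd]; norm_num [hzero]
          rw [h2] at h1
          exact h1
        obtain ⟨N, hN0, hN⟩ :=
          flow_disjoint ψ hcont' hzero' hadd' hfree' hpos' U a b ha hb hU
        refine ⟨N, hN0, fun s hs => ?_⟩
        have := hN (-s) (by rwa [abs_neg])
        simpa [hψ] using this
    obtain ⟨N, hN0, hdisj⟩ := hdisj
    have hbound : ∀ t : ℝ, |t| < δ → |α t| < N := by
      intro t ht
      by_contra hcon
      push_neg at hcon
      have := hdisj (α t) hcon
      exact absurd this (Set.nonempty_iff_ne_empty.mp (hmeets t ht))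
    -- α is ℕ-homogeneous
    set F : ℝ →+ ℝ := AddMonoidHom.mk' α hα with hF
    have hnsmul : ∀ (n : ℕ) (t : ℝ), α (n * t) = n * α t := by
      intro n t
      have := map_nsmul F n t
      simpa [hF, nsmul_eq_mul] using this
    -- continuity at 0
    have key : Filter.Tendsto α (nhds 0) (nhds 0) := by
      rw [Metric.tendsto_nhds_nhds]
      intro ε hε
      obtain ⟨n, hn⟩ := exists_nat_gt (N / ε)
      refine ⟨δ / (n + 1), by positivity, ?_⟩
      intro t ht
      rw [Real.dist_eq, sub_zero] at ht ⊢
      have h1 : |((n:ℝ) + 1) * t| < δ := by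
        rw [abs_mul, abs_of_nonneg (by positivity : (0:ℝ) ≤ (n:ℝ) + 1)]
        calc ((n:ℝ) + 1) * |t| < ((n:ℝ) + 1) * (δ / ((n:ℝ) + 1)) := by
              apply mul_lt_mul_of_pos_left ht (by positivity)
          _ = δ := by field_simp
      have h2 : |α (((n:ℝ) + 1) * t)| < N := hbound _ h1
      have h3 : α (((n:ℝ) + 1) * t) = ((n:ℝ) + 1) * α t := by
        have := hnsmul (n + 1) t
        push_cast at this
        exact this
      rw [h3, abs_mul, abs_of_nonneg (by positivity : (0:ℝ) ≤ (n:ℝ) + 1)] at h2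
      have hne : (0:ℝ) < (n:ℝ) + 1 := by positivity
      have h4 : |α t| < N / ((n:ℝ) + 1) := by
        rw [lt_div_iff₀ hne]; linarith [h2]
      have h5 : N / ((n:ℝ) + 1) < ε := by
        rw [div_lt_iff₀ hne]
        rw [div_lt_iff₀ hε] at hn
        nlinarith
      linarith
    -- continuity everywhere
    rw [continuous_iff_continuousAt]
    intro x
    have h1 : Filter.Tendsto (fun y : ℝ => y - x) (nhds x) (nhds 0) := by
      have := (continuous_id.sub (continuous_const (y := x))).tendsto x
      simpa [Pi.sub_def] using this
    have h2 : Filter.Tendsto (fun y => α (y - x) + α x) (nhds x) (nhds (0 + α x)) :=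
      (key.comp h1).add tendsto_const_nhds
    rw [zero_add] at h2
    exact h2.congr (fun y => by rw [← hα, sub_add_cancel])
end

section
/- Let g be an orientation-preserving C² diffeomorphism of the circle with nonabelian centralizer in Diff₊²(S¹). Then g has rational rotation number; equivalently, some power g^k (k ≥ 1) has a fixed point. -/
set_option linter.unusedSectionVars false
set_option linter.unusedTactic false
set_option linter.unusedVariables false

open Function Set Filter Topology Real MeasureTheory Finset CircleDeg1Lift

noncomputable section

namespace Cor211

lemma symm_strictMono {g : ℝ ≃ ℝ} (hsm : StrictMono ⇑g) : StrictMono ⇑g.symm := by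
  intro a b hab
  rcases lt_trichotomy (g.symm a) (g.symm b) with h | h | h
  · exact h
  · exact absurd (by rw [← g.apply_symm_apply a, ← g.apply_symm_apply b, h]) hab.ne
  · have := hsm h
    rw [g.apply_symm_apply, g.apply_symm_apply] at this
    exact absurd this hab.asymm

lemma symm_per {g : ℝ ≃ ℝ} (hper : ∀ x, g (x + 1) = g x + 1) :
    ∀ x, g.symm (x + 1) = g.symm x + 1 := by
  intro x
  apply g.injective
  rw [hper, g.apply_symm_apply, g.apply_symm_apply]

/-- Context: a lift of an orientation preserving circle homeomorphism. -/
structure Ctx where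
  g : ℝ ≃ ℝ
  hsm : StrictMono ⇑g
  hper : ∀ x, g (x + 1) = g x + 1

namespace Ctx

variable (c : Ctx)

/-- the lift as a `CircleDeg1Lift` unit. -/
def U : CircleDeg1Liftˣ where
  val := ⟨⟨⇑c.g, c.hsm.monotone⟩, c.hper⟩
  inv := ⟨⟨⇑c.g.symm, (symm_strictMono c.hsm).monotone⟩, symm_per c.hper⟩
  val_inv := CircleDeg1Lift.ext fun x => c.g.apply_symm_apply x
  inv_val := CircleDeg1Lift.ext fun x => c.g.symm_apply_apply x

@[simp] lemma U_apply (x : ℝ) : (c.U : CircleDeg1Lift) x = c.g x := rfl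

@[simp] lemma U_inv_apply (x : ℝ) : ((c.U⁻¹ : CircleDeg1Liftˣ) : CircleDeg1Lift) x = c.g.symm x := rfl

/-- integer powers as functions -/
def z (n : ℤ) : ℝ → ℝ := ⇑((c.U ^ n : CircleDeg1Liftˣ) : CircleDeg1Lift)

/-- rotation number -/
def θ : ℝ := translationNumber (c.U : CircleDeg1Lift)

lemma z_add (m n : ℤ) (x : ℝ) : c.z (m + n) x = c.z m (c.z n x) := by
  simp only [z, zpow_add, Units.val_mul, CircleDeg1Lift.mul_apply]

@[simp] lemma z_zero (x : ℝ) : c.z 0 x = x := by simp [z]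

@[simp] lemma z_one (x : ℝ) : c.z 1 x = c.g x := by
  simp only [z, zpow_one]; rfl

lemma z_int (n : ℤ) (x : ℝ) (m : ℤ) : c.z n (x + m) = c.z n x + m :=
  CircleDeg1Lift.map_add_int _ x m

lemma z_bij (n : ℤ) : Function.Bijective (c.z n) :=
  isUnit_iff_bijective.mp (c.U ^ n).isUnit

lemma z_sm (n : ℤ) : StrictMono (c.z n) :=
  (CircleDeg1Lift.monotone _).strictMono_of_injective (c.z_bij n).injective

lemma z_neg_z (n : ℤ) (x : ℝ) : c.z (-n) (c.z n x) = x := by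
  rw [← c.z_add]; simp

lemma z_tau (n : ℤ) : translationNumber ((c.U ^ n : CircleDeg1Liftˣ) : CircleDeg1Lift)
    = n * c.θ := translationNumber_zpow c.U n

lemma z_natCast (n : ℕ) : c.z (n : ℤ) = (⇑c.g)^[n] := by
  simp only [z, zpow_natCast, Units.val_pow_eq_pow_val, CircleDeg1Lift.coe_pow]
  rfl

lemma z_neg_natCast (n : ℕ) : c.z (-(n : ℤ)) = (⇑c.g.symm)^[n] := by
  simp only [z, zpow_neg, zpow_natCast, ← inv_pow, Units.val_pow_eq_pow_val,
    CircleDeg1Lift.coe_pow]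
  rfl

variable {c} in
/-- base order comparison -/
lemma z_lt_iff (hirr : ∀ q : ℤ, q ≠ 0 → ∀ p : ℤ, (q : ℝ) * c.θ ≠ p) (n : ℤ) (m : ℤ) (x : ℝ) : c.z n x < x + m ↔ (n : ℝ) * c.θ < m := by
  rcases eq_or_ne n 0 with rfl | hn
  · simp
  rcases lt_trichotomy ((n : ℝ) * c.θ) (m : ℝ) with h | h | h
  · have := CircleDeg1Lift.map_lt_of_translationNumber_lt_int (f := (c.U ^ n : CircleDeg1Liftˣ))
      (by rw [c.z_tau]; exact h) x
    simpa [z] using iff_of_true this h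
  · exact absurd h (hirr n hn m)
  · have := CircleDeg1Lift.lt_map_of_int_lt_translationNumber (f := (c.U ^ n : CircleDeg1Liftˣ))
      (by rw [c.z_tau]; exact h) x
    rw [show ((c.U ^ n : CircleDeg1Liftˣ) : CircleDeg1Lift) x = c.z n x from rfl] at this
    exact iff_of_false (by linarith) (by linarith)

/-- full order isomorphism between the orbit and the rotation orbit -/
lemma ordiso_lt (hirr : ∀ q : ℤ, q ≠ 0 → ∀ p : ℤ, (q : ℝ) * c.θ ≠ p) (n m k l : ℤ) (x : ℝ) :
    c.z n x + m < c.z k x + l ↔ (n : ℝ) * c.θ + m < k * c.θ + l := by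
  have e : c.z n x = c.z (n - k) (c.z k x) := by rw [← c.z_add, sub_add_cancel]
  have h2 := z_lt_iff hirr (n - k) (l - m) (c.z k x)
  push_cast at h2
  rw [sub_mul] at h2
  rw [e]
  constructor <;> intro h
  · have := h2.1 (by linarith)
    linarith
  · have := h2.2 (by linarith)
    linarith

lemma ordiso_le (hirr : ∀ q : ℤ, q ≠ 0 → ∀ p : ℤ, (q : ℝ) * c.θ ≠ p) (n m k l : ℤ) (x : ℝ) :
    c.z n x + m ≤ c.z k x + l ↔ (n : ℝ) * c.θ + m ≤ k * c.θ + l := by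
  rw [← not_lt, ← not_lt, not_iff_not]
  exact c.ordiso_lt hirr k l n m x

lemma ordiso_eq (hirr : ∀ q : ℤ, q ≠ 0 → ∀ p : ℤ, (q : ℝ) * c.θ ≠ p) (n m k l : ℤ) (x : ℝ) :
    c.z n x + m = c.z k x + l ↔ (n : ℝ) * c.θ + m = k * c.θ + l := by
  constructor <;> intro h
  · exact le_antisymm ((c.ordiso_le hirr n m k l x).1 h.le)
      ((c.ordiso_le hirr k l n m x).1 h.ge)
  · exact le_antisymm ((c.ordiso_le hirr n m k l x).2 h.le)
      ((c.ordiso_le hirr k l n m x).2 h.ge)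

lemma rot_inj (hirr : ∀ q : ℤ, q ≠ 0 → ∀ p : ℤ, (q : ℝ) * c.θ ≠ p) {n m k l : ℤ} (h : (n : ℝ) * c.θ + m = k * c.θ + l) : n = k ∧ m = l := by
  by_cases hnk : n = k
  · subst hnk
    constructor
    · rfl
    · have : (m : ℝ) = l := by linarith
      exact_mod_cast this
  · exfalso
    have : ((n - k : ℤ) : ℝ) * c.θ = ((l - m : ℤ) : ℝ) := by push_cast; ring_nf; linarith
    exact hirr (n - k) (sub_ne_zero.2 hnk) (l - m) this

end Ctx

/-! ### Stage 2: closest returns -/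

lemma round_nearest (t : ℝ) (m : ℤ) : |t - round t| ≤ |t - m| := by
  rcases eq_or_ne m (round t) with rfl | hm
  · exact le_rfl
  · have h1 : (1 : ℝ) ≤ |(m : ℝ) - round t| := by
      have h : (1 : ℤ) ≤ |m - round t| := Int.one_le_abs (sub_ne_zero.2 hm)
      calc (1:ℝ) ≤ ((|m - round t| : ℤ) : ℝ) := by exact_mod_cast h
        _ = |(m : ℝ) - round t| := by push_cast; rfl
    have h2 : |t - round t| ≤ 1 / 2 := abs_sub_round t
    have h3 : |(m:ℝ) - round t| ≤ |t - m| + |t - round t| := by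
      calc |(m:ℝ) - round t| = |(t - round t) - (t - m)| := by ring_nf
        _ ≤ |t - round t| + |t - m| := abs_sub _ _
        _ = |t - m| + |t - round t| := by ring
    linarith

namespace Ctx

variable (c : Ctx)

/-- distance of `k θ` to the nearest integer -/
def nrm (k : ℤ) : ℝ := |(k : ℝ) * c.θ - round ((k : ℝ) * c.θ)|

lemma nrm_le (k m : ℤ) : c.nrm k ≤ |(k : ℝ) * c.θ - m| := round_nearest _ m

lemma nrm_le_abs (k : ℤ) (m : ℤ) : c.nrm k ≤ |(k : ℝ) * c.θ + m| := by
  have := c.nrm_le k (-m)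
  simpa using this

lemma nrm_pos (hirr : ∀ q : ℤ, q ≠ 0 → ∀ p : ℤ, (q : ℝ) * c.θ ≠ p) {k : ℤ} (hk : k ≠ 0) :
    0 < c.nrm k := by
  rw [nrm, abs_pos, sub_ne_zero]
  exact hirr k hk _

lemma nrm_neg (k : ℤ) : c.nrm (-k) = c.nrm k := by
  have key : ∀ j : ℤ, c.nrm (-j) ≤ c.nrm j := by
    intro j
    have h := c.nrm_le (-j) (-(round ((j:ℝ) * c.θ)))
    have e : |((-j : ℤ) : ℝ) * c.θ - ((-(round ((j:ℝ) * c.θ)) : ℤ) : ℝ)| = c.nrm j := by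
      rw [nrm, ← abs_neg]
      push_cast
      ring_nf
    rw [e] at h
    exact h
  have h1 := key k
  have h2 := key (-k)
  rw [neg_neg] at h2
  exact le_antisymm h1 h2

lemma nrm_half (k : ℤ) : c.nrm k ≤ 1 / 2 := abs_sub_round _

lemma exists_nrm_lt {ε : ℝ} (hε : 0 < ε) : ∃ k : ℕ, 0 < k ∧ c.nrm k < ε := by
  obtain ⟨n, hn⟩ := exists_nat_one_div_lt hε
  obtain ⟨k, hk0, -, hk⟩ := Real.exists_nat_abs_mul_sub_round_le c.θ (n := n + 1) (Nat.succ_pos n)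
  have hk' : |(k:ℝ) * c.θ - round ((k:ℝ) * c.θ)| ≤ 1 / ((n:ℝ) + 1) := by
    refine le_trans (by exact_mod_cast hk) ?_
    have h1 : (0:ℝ) < (n:ℝ) + 1 := by positivity
    have h2 : (0:ℝ) < ((n + 1 + 1 : ℕ) : ℝ) := by positivity
    rw [div_le_div_iff₀ h2 h1]
    push_cast
    linarith
  refine ⟨k, hk0, ?_⟩
  have e : c.nrm k = |(k:ℝ) * c.θ - round ((k:ℝ) * c.θ)| := by
    simp only [nrm, Int.cast_natCast]
  rw [e]
  linarith

/-- a record (closest return) time -/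
def Rec (q : ℕ) : Prop := 0 < q ∧ ∀ i : ℕ, 0 < i → i < q → c.nrm q < c.nrm i

lemma rec_unbounded (hirr : ∀ q : ℤ, q ≠ 0 → ∀ p : ℤ, (q : ℝ) * c.θ ≠ p) (Q : ℕ) :
    ∃ q : ℕ, Q < q ∧ c.Rec q := by
  have hε : ∃ ε : ℝ, 0 < ε ∧ ∀ i : ℕ, 0 < i → i ≤ Q → ε ≤ c.nrm i := by
    rcases Nat.eq_zero_or_pos Q with rfl | hQ
    · exact ⟨1, one_pos, fun i hi hiQ => absurd (lt_of_lt_of_le hi hiQ) (lt_irrefl 0)⟩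
    · have hne : (Finset.Icc 1 Q).Nonempty := ⟨1, Finset.mem_Icc.2 ⟨le_refl 1, hQ⟩⟩
      obtain ⟨i₀, hi₀mem, hi₀⟩ := Finset.exists_min_image (Finset.Icc 1 Q)
        (fun i => c.nrm i) hne
      refine ⟨c.nrm i₀, c.nrm_pos hirr ?_, fun i hi hiQ => hi₀ i (Finset.mem_Icc.2 ⟨hi, hiQ⟩)⟩
      have h1 := (Finset.mem_Icc.1 hi₀mem).1
      have : i₀ ≠ 0 := Nat.one_le_iff_ne_zero.1 h1
      exact_mod_cast this
  obtain ⟨ε, hε0, hεmin⟩ := hε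
  have hex : ∃ k : ℕ, 0 < k ∧ c.nrm k < ε := c.exists_nrm_lt hε0
  classical
  set q := Nat.find hex with hq
  obtain ⟨hq0, hqε⟩ := Nat.find_spec hex
  have hmin : ∀ i : ℕ, i < q → ¬(0 < i ∧ c.nrm i < ε) := fun i hi => Nat.find_min hex hi
  refine ⟨q, ?_, hq0, ?_⟩
  · by_contra hle
    push_neg at hle
    exact absurd (hεmin q hq0 hle) (not_le.2 hqε)
  · intro i hi0 hiq
    have := hmin i hiq
    push_neg at this
    exact lt_of_lt_of_le hqε (this hi0)

lemma rotdense (hirr : ∀ q : ℤ, q ≠ 0 → ∀ p : ℤ, (q : ℝ) * c.θ ≠ p) (t : ℝ) {ε : ℝ}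
    (hε : 0 < ε) : ∃ n m : ℤ, |(n : ℝ) * c.θ + m - t| < ε := by
  obtain ⟨k, hk0, hkε⟩ := c.exists_nrm_lt hε
  obtain ⟨s, hsdef⟩ : ∃ s : ℝ, s = (k : ℝ) * c.θ - round ((k:ℝ) * c.θ) := ⟨_, rfl⟩
  have hnrmk : c.nrm k = |s| := by
    rw [nrm, hsdef]
    push_cast
    rfl
  have hspos : 0 < |s| := by
    rw [← hnrmk]
    exact c.nrm_pos hirr (by exact_mod_cast hk0.ne')
  have habs : |s| < ε := hnrmk ▸ hkε
  obtain ⟨j, mm, hj⟩ : ∃ j mm : ℤ, (j : ℝ) * c.θ + mm = |s| := by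
    rcases abs_cases s with ⟨h1, _⟩ | ⟨h1, _⟩
    · exact ⟨(k : ℤ), -round ((k:ℝ) * c.θ), by push_cast; rw [h1, hsdef]; ring⟩
    · exact ⟨-(k : ℤ), round ((k:ℝ) * c.θ), by push_cast; rw [h1, hsdef]; ring⟩
  set N := ⌊t / |s|⌋ with hN
  refine ⟨N * j, N * mm, ?_⟩
  have hval : ((N * j : ℤ) : ℝ) * c.θ + ((N * mm : ℤ) : ℝ) = N * |s| := by
    push_cast
    linear_combination (N : ℝ) * hj
  rw [hval]
  have h1 : (N : ℝ) ≤ t / |s| := Int.floor_le _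
  have hub : (N : ℝ) * |s| ≤ t := (le_div_iff₀ hspos).1 h1
  have h2 : t / |s| < (N : ℝ) + 1 := Int.lt_floor_add_one _
  have hlb : t < ((N : ℝ) + 1) * |s| := (div_lt_iff₀ hspos).1 h2
  rw [abs_lt]
  constructor
  · nlinarith
  · linarith

end Ctx

/-! ### Stage 3: total length of intervals disjoint mod 1 -/

lemma sum_len_le {ι : Type*} [DecidableEq ι] (s : Finset ι) (a b : ι → ℝ)
    (hab : ∀ i ∈ s, a i ≤ b i)
    (hsep : ∀ i ∈ s, ∀ j ∈ s, ∀ m : ℤ, (i ≠ j ∨ m ≠ 0) → b i + m ≤ a j ∨ b j ≤ a i + m) :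
    ∑ i ∈ s, (b i - a i) ≤ 2 := by
  have hlen1 : ∀ i ∈ s, b i - a i ≤ 1 := by
    intro i hi
    rcases hsep i hi i hi (-1) (Or.inr (by norm_num)) with h | h
    · push_cast at h; linarith
    · push_cast at h; linarith [hab i hi]
  set I : ι → Set ℝ := fun i => Set.Ioo (a i - ⌊a i⌋) (b i - ⌊a i⌋) with hI
  have hdisj : (↑s : Set ι).PairwiseDisjoint I := by
    intro i hi j hj hij
    rw [Function.onFun, Set.disjoint_left]
    intro x hxi hxj
    obtain ⟨hxi1, hxi2⟩ := hxi
    obtain ⟨hxj1, hxj2⟩ := hxj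
    rcases hsep i hi j hj (⌊a j⌋ - ⌊a i⌋) (Or.inl hij) with h | h
    · push_cast at h; linarith
    · push_cast at h; linarith
  have hsub : ∀ i ∈ s, I i ⊆ Set.Ioo (0 : ℝ) 2 := by
    intro i hi x hx
    obtain ⟨hx1, hx2⟩ := hx
    have h1 : (0:ℝ) ≤ a i - ⌊a i⌋ := by
      have := Int.fract_nonneg (a i); rwa [Int.fract] at this
    have h2 : a i - ⌊a i⌋ < 1 := by
      have := Int.fract_lt_one (a i); rwa [Int.fract] at this
    exact ⟨by linarith, by linarith [hlen1 i hi]⟩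
  have hvol : ∑ i ∈ s, MeasureTheory.volume (I i) ≤ MeasureTheory.volume (Set.Ioo (0:ℝ) 2) := by
    rw [← MeasureTheory.measure_biUnion_finset hdisj (fun i _ => measurableSet_Ioo)]
    exact MeasureTheory.measure_mono (Set.iUnion₂_subset hsub)
  have hvol2 : ∑ i ∈ s, ENNReal.ofReal (b i - a i) ≤ ENNReal.ofReal 2 := by
    have e1 : ∀ i ∈ s, MeasureTheory.volume (I i) = ENNReal.ofReal (b i - a i) := by
      intro i hi
      rw [hI]
      simp only [Real.volume_Ioo]
      congr 1
      ring
    rw [← Finset.sum_congr rfl e1]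
    refine le_trans hvol ?_
    rw [Real.volume_Ioo]
    norm_num
  have := ENNReal.ofReal_sum_of_nonneg (s := s) (f := fun i => b i - a i)
    (fun i hi => by show 0 ≤ b i - a i; linarith [hab i hi])
  rw [← this] at hvol2
  exact (ENNReal.ofReal_le_ofReal_iff (by norm_num)).1 hvol2

/-! ### Stage 4: derivatives -/

lemma per_int {f : ℝ → ℝ} (h : ∀ x, f (x + 1) = f x) (m : ℤ) (x : ℝ) : f (x + m) = f x := by
  have hnat : ∀ (n : ℕ) (y : ℝ), f (y + n) = f y := by
    intro n
    induction n with
    | zero => simp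
    | succ n ih =>
      intro y
      have e : y + ((n : ℝ) + 1) = (y + n) + 1 := by ring
      push_cast
      rw [e, h, ih]
  rcases le_or_gt 0 m with hm | hm
  · have e : ((m.toNat : ℕ) : ℝ) = (m : ℝ) := by exact_mod_cast Int.toNat_of_nonneg hm
    rw [← e]
    exact hnat m.toNat x
  · have hn : ((- m).toNat : ℝ) = (-m : ℝ) := by
      exact_mod_cast Int.toNat_of_nonneg (by linarith : (0:ℤ) ≤ -m)
    have h2 := hnat (-m).toNat (x + m)
    rw [hn] at h2
    push_cast at h2
    rw [show x + (m:ℝ) + -(m:ℝ) = x by ring] at h2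
    exact h2.symm

lemma deriv_nonneg_of_monotone {f : ℝ → ℝ} {d x : ℝ} (hf : Monotone f)
    (h : HasDerivAt f d x) : 0 ≤ d := by
  have ht := hasDerivAt_iff_tendsto_slope.1 h
  have hmono : Set.Ioi x ⊆ {x}ᶜ := fun y hy => ne_of_gt hy
  have ht' : Filter.Tendsto (slope f x) (𝓝[>] x) (𝓝 d) :=
    ht.mono_left (nhdsWithin_mono x hmono)
  refine ge_of_tendsto ht' ?_
  filter_upwards [self_mem_nhdsWithin] with y hy
  rw [slope_def_field]
  have h1 : x < y := hy
  have h2 : f x ≤ f y := hf h1.le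
  exact div_nonneg (by linarith) (by linarith)

namespace Ctx

variable (c : Ctx)

/-- derivative of g -/
def dg : ℝ → ℝ := deriv ⇑c.g

/-- derivative of g⁻¹ -/
def ds : ℝ → ℝ := deriv ⇑c.g.symm

/-- derivative of the n-th iterate of g -/
def Pp (n : ℕ) (x : ℝ) : ℝ := ∏ i ∈ Finset.range n, c.dg ((⇑c.g)^[i] x)

/-- derivative of the n-th iterate of g⁻¹ -/
def Sp (n : ℕ) (x : ℝ) : ℝ := ∏ i ∈ Finset.range n, c.ds ((⇑c.g.symm)^[i] x)

lemma iter_int (n : ℕ) (x : ℝ) (m : ℤ) : (⇑c.g)^[n] (x + m) = (⇑c.g)^[n] x + m := by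
  rw [← c.z_natCast, c.z_int]

lemma iter_symm_int (n : ℕ) (x : ℝ) (m : ℤ) :
    (⇑c.g.symm)^[n] (x + m) = (⇑c.g.symm)^[n] x + m := by
  rw [← c.z_neg_natCast, c.z_int]

lemma iter_inv (n : ℕ) (x : ℝ) : (⇑c.g)^[n] ((⇑c.g.symm)^[n] x) = x := by
  induction n generalizing x with
  | zero => rfl
  | succ n ih =>
    rw [Function.iterate_succ_apply' (⇑c.g.symm), Function.iterate_succ_apply (⇑c.g)]
    rw [c.g.apply_symm_apply]
    exact ih x

section deriv

variable (hc2 : ContDiff ℝ 2 ⇑c.g) (hc2' : ContDiff ℝ 2 ⇑c.g.symm)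
include hc2 hc2'

lemma hasDg (x : ℝ) : HasDerivAt (⇑c.g) (c.dg x) x :=
  ((hc2.differentiable (by norm_num)) x).hasDerivAt

lemma hasDs (x : ℝ) : HasDerivAt (⇑c.g.symm) (c.ds x) x :=
  ((hc2'.differentiable (by norm_num)) x).hasDerivAt

lemma dg_cont : Continuous c.dg := hc2.continuous_deriv (by norm_num)

lemma ds_cont : Continuous c.ds := hc2'.continuous_deriv (by norm_num)

lemma ds_dg (x : ℝ) : c.ds (c.g x) * c.dg x = 1 := by
  have h1 : HasDerivAt (⇑c.g.symm ∘ ⇑c.g) (c.ds (c.g x) * c.dg x) x :=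
    (c.hasDs hc2 hc2' (c.g x)).comp x (c.hasDg hc2 hc2' x)
  have h2 : ⇑c.g.symm ∘ ⇑c.g = id := funext fun y => c.g.symm_apply_apply y
  rw [h2] at h1
  exact h1.unique (hasDerivAt_id x)

lemma dg_pos (x : ℝ) : 0 < c.dg x := by
  have h0 : 0 ≤ c.dg x := deriv_nonneg_of_monotone c.hsm.monotone (c.hasDg hc2 hc2' x)
  rcases h0.lt_or_eq with h | h
  · exact h
  · exfalso
    have := c.ds_dg hc2 hc2' x
    rw [← h] at this
    simp at this

lemma ds_pos (x : ℝ) : 0 < c.ds x := by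
  have h0 : 0 ≤ c.ds x := deriv_nonneg_of_monotone (symm_strictMono c.hsm).monotone
    (c.hasDs hc2 hc2' x)
  rcases h0.lt_or_eq with h | h
  · exact h
  · exfalso
    have := c.ds_dg hc2 hc2' (c.g.symm x)
    rw [c.g.apply_symm_apply, ← h] at this
    simp at this

lemma dg_per (x : ℝ) : c.dg (x + 1) = c.dg x := by
  have h1 : HasDerivAt (fun y => c.g (y + 1)) (c.dg (x + 1) * 1) x :=
    (c.hasDg hc2 hc2' (x + 1)).comp x ((hasDerivAt_id x).add_const 1)
  have h2 : HasDerivAt (fun y => c.g y + 1) (c.dg x) x := (c.hasDg hc2 hc2' x).add_const 1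
  have h3 : (fun y => c.g (y + 1)) = fun y => c.g y + 1 := funext fun y => c.hper y
  rw [h3] at h1
  have := h1.unique h2
  linarith [this]

lemma ds_per (x : ℝ) : c.ds (x + 1) = c.ds x := by
  have h1 : HasDerivAt (fun y => c.g.symm (y + 1)) (c.ds (x + 1) * 1) x :=
    (c.hasDs hc2 hc2' (x + 1)).comp x ((hasDerivAt_id x).add_const 1)
  have h2 : HasDerivAt (fun y => c.g.symm y + 1) (c.ds x) x := (c.hasDs hc2 hc2' x).add_const 1
  have h3 : (fun y => c.g.symm (y + 1)) = fun y => c.g.symm y + 1 :=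
    funext fun y => symm_per c.hper y
  rw [h3] at h1
  have := h1.unique h2
  linarith [this]

lemma dg_int (x : ℝ) (m : ℤ) : c.dg (x + m) = c.dg x := per_int (c.dg_per hc2 hc2') m x

lemma ds_int (x : ℝ) (m : ℤ) : c.ds (x + m) = c.ds x := per_int (c.ds_per hc2 hc2') m x

/-- Lipschitz constant for log ∘ dg -/
lemma logdg_lip : ∃ M : ℝ, 0 ≤ M ∧
    ∀ a b : ℝ, |Real.log (c.dg a) - Real.log (c.dg b)| ≤ M * |a - b| := by
  have h21 : (2 : WithTop ℕ∞) = 1 + 1 := by norm_num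
  have hc2'' : ContDiff ℝ (1 + 1) ⇑c.g := by rw [← h21]; exact hc2
  have hd1 : ContDiff ℝ 1 (deriv ⇑c.g) := (contDiff_succ_iff_deriv.mp hc2'').2.2
  have hdiffd : Differentiable ℝ (deriv ⇑c.g) := hd1.differentiable (by norm_num)
  have hddcont : Continuous (deriv (deriv ⇑c.g)) := hd1.continuous_deriv le_rfl
  set φ : ℝ → ℝ := fun x => deriv (deriv ⇑c.g) x / c.dg x with hφ
  have hφcont : Continuous φ :=
    hddcont.div (c.dg_cont hc2 hc2') fun x => (c.dg_pos hc2 hc2' x).ne'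
  have hlog : ∀ x, HasDerivAt (fun y => Real.log (c.dg y)) (φ x) x := by
    intro x
    exact ((hdiffd x).hasDerivAt).log (c.dg_pos hc2 hc2' x).ne'
  have hddper : ∀ x, deriv (deriv ⇑c.g) (x + 1) = deriv (deriv ⇑c.g) x := by
    intro x
    have h1 : HasDerivAt (fun y => c.dg (y + 1)) (deriv (deriv ⇑c.g) (x + 1) * 1) x :=
      ((hdiffd (x + 1)).hasDerivAt).comp x ((hasDerivAt_id x).add_const 1)
    have h3 : (fun y => c.dg (y + 1)) = c.dg := funext fun y => c.dg_per hc2 hc2' y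
    rw [h3] at h1
    have := h1.unique (hdiffd x).hasDerivAt
    linarith [this]
  have hφper : ∀ x, φ (x + 1) = φ x := by
    intro x
    rw [hφ]
    simp only []
    rw [hddper, c.dg_per hc2 hc2']
  have hne : Set.Nonempty (Set.Icc (0:ℝ) 1) := ⟨0, by norm_num⟩
  obtain ⟨x₀, -, hx₀⟩ := isCompact_Icc.exists_isMaxOn (f := fun x => |φ x|) hne
    ((continuous_abs.comp hφcont).continuousOn)
  set M := |φ x₀| with hM
  have hφbd : ∀ x, |φ x| ≤ M := by
    intro x
    have h := per_int hφper ⌊x⌋ (Int.fract x)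
    rw [Int.fract_add_floor] at h
    rw [h]
    exact hx₀ (Set.mem_Icc.2 ⟨Int.fract_nonneg x, (Int.fract_lt_one x).le⟩)
  refine ⟨M, abs_nonneg _, fun a b => ?_⟩
  have := Convex.norm_image_sub_le_of_norm_hasDerivWithin_le
    (f := fun y => Real.log (c.dg y)) (f' := φ) (C := M) (s := Set.univ)
    (fun x _ => (hlog x).hasDerivWithinAt)
    (fun x _ => by rw [Real.norm_eq_abs]; exact hφbd x) convex_univ (Set.mem_univ b)
    (Set.mem_univ a)
  simpa [Real.norm_eq_abs] using this

lemma hasPp (n : ℕ) (x : ℝ) : HasDerivAt ((⇑c.g)^[n]) (c.Pp n x) x := by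
  induction n generalizing x with
  | zero => simpa [Pp] using hasDerivAt_id x
  | succ n ih =>
    have h1 : HasDerivAt (⇑c.g ∘ (⇑c.g)^[n]) (c.dg ((⇑c.g)^[n] x) * c.Pp n x) x :=
      (c.hasDg hc2 hc2' ((⇑c.g)^[n] x)).comp x (ih x)
    rw [← Function.iterate_succ'] at h1
    have e : c.Pp (n + 1) x = c.dg ((⇑c.g)^[n] x) * c.Pp n x := by
      rw [Pp, Finset.prod_range_succ, mul_comm]; rfl
    rw [e]
    exact h1

lemma hasSp (n : ℕ) (x : ℝ) : HasDerivAt ((⇑c.g.symm)^[n]) (c.Sp n x) x := by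
  induction n generalizing x with
  | zero => simpa [Sp] using hasDerivAt_id x
  | succ n ih =>
    have h1 : HasDerivAt (⇑c.g.symm ∘ (⇑c.g.symm)^[n])
        (c.ds ((⇑c.g.symm)^[n] x) * c.Sp n x) x :=
      (c.hasDs hc2 hc2' ((⇑c.g.symm)^[n] x)).comp x (ih x)
    rw [← Function.iterate_succ'] at h1
    have e : c.Sp (n + 1) x = c.ds ((⇑c.g.symm)^[n] x) * c.Sp n x := by
      rw [Sp, Finset.prod_range_succ, mul_comm]; rfl
    rw [e]
    exact h1

lemma Pp_pos (n : ℕ) (x : ℝ) : 0 < c.Pp n x :=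
  Finset.prod_pos fun i _ => c.dg_pos hc2 hc2' _

lemma Sp_pos (n : ℕ) (x : ℝ) : 0 < c.Sp n x :=
  Finset.prod_pos fun i _ => c.ds_pos hc2 hc2' _

lemma Pp_int (n : ℕ) (x : ℝ) (m : ℤ) : c.Pp n (x + m) = c.Pp n x := by
  rw [Pp, Pp]
  refine Finset.prod_congr rfl fun i _ => ?_
  rw [c.iter_int, c.dg_int hc2 hc2']

lemma Sp_int (n : ℕ) (x : ℝ) (m : ℤ) : c.Sp n (x + m) = c.Sp n x := by
  rw [Sp, Sp]
  refine Finset.prod_congr rfl fun i _ => ?_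
  rw [c.iter_symm_int, c.ds_int hc2 hc2']

lemma PS1 (n : ℕ) (x : ℝ) : c.Pp n ((⇑c.g.symm)^[n] x) * c.Sp n x = 1 := by
  have h1 : HasDerivAt ((⇑c.g)^[n] ∘ (⇑c.g.symm)^[n])
      (c.Pp n ((⇑c.g.symm)^[n] x) * c.Sp n x) x :=
    (c.hasPp hc2 hc2' n ((⇑c.g.symm)^[n] x)).comp x (c.hasSp hc2 hc2' n x)
  have h2 : (⇑c.g)^[n] ∘ (⇑c.g.symm)^[n] = id := funext fun y => c.iter_inv n y
  rw [h2] at h1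
  exact h1.unique (hasDerivAt_id x)

lemma log_Pp (n : ℕ) (x : ℝ) :
    Real.log (c.Pp n x) = ∑ i ∈ Finset.range n, Real.log (c.dg ((⇑c.g)^[i] x)) := by
  rw [Pp]
  exact Real.log_prod fun i _ => (c.dg_pos hc2 hc2' _).ne'

end deriv

end Ctx

/-! ### Stage 5: key distortion estimate -/

namespace Ctx

variable (c : Ctx)

section key

variable (hirr : ∀ q : ℤ, q ≠ 0 → ∀ p : ℤ, (q : ℝ) * c.θ ≠ p)
variable (hc2 : ContDiff ℝ 2 ⇑c.g) (hc2' : ContDiff ℝ 2 ⇑c.g.symm)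
include hirr hc2 hc2'

lemma key_estimate {M : ℝ} (hM0 : 0 ≤ M)
    (hMlip : ∀ a b : ℝ, |Real.log (c.dg a) - Real.log (c.dg b)| ≤ M * |a - b|)
    {q : ℕ} (hq : c.Rec q) (x : ℝ) :
    Real.exp (-(2 * M)) ≤ c.Pp q x * c.Sp q x := by
  obtain ⟨hq0, hqrec⟩ := hq
  set p : ℤ := round ((q : ℝ) * c.θ) with hp
  set δ : ℝ := (q : ℝ) * c.θ - p with hδ
  have hnrmq : c.nrm q = |δ| := by rw [nrm, hδ, hp]; push_cast; rfl
  have hδhalf : |δ| ≤ 1 / 2 := by rw [← hnrmq]; exact c.nrm_half _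
  -- record property for integer differences
  have hNlt : ∀ k : ℤ, k ≠ 0 → k.natAbs < q → |δ| < c.nrm k := by
    intro k hk hkq
    have h1 : c.nrm k = c.nrm (k.natAbs : ℤ) := by
      rcases Int.natAbs_eq k with h | h
      · nth_rewrite 1 [h]; rfl
      · nth_rewrite 1 [h]; rw [nrm_neg]
    rw [h1, ← hnrmq]
    exact hqrec k.natAbs (by positivity) hkq
  -- the points
  set A : ℤ → ℝ := fun i => c.z (i - q) x + p with hA
  set C : ℤ → ℝ := fun i => c.z i x with hC
  -- separation on the rotation side + order transfer
  have hsep : ∀ i ∈ Finset.range q, ∀ j ∈ Finset.range q, ∀ m : ℤ, (i ≠ j ∨ m ≠ 0) →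
      max (A i) (C i) + m ≤ min (A j) (C j) ∨
      max (A j) (C j) ≤ min (A i) (C i) + m := by
    intro i hi j hj m hij
    rw [Finset.mem_range] at hi hj
    set E : ℝ := (i : ℝ) * c.θ + m - (j : ℝ) * c.θ with hE
    have habsE : |δ| ≤ |E| := by
      rcases eq_or_ne i j with rfl | hne
      · have hm : m ≠ 0 := by tauto
        have h1 : (1:ℝ) ≤ |E| := by
          have he : E = (m : ℝ) := by rw [hE]; ring
          rw [he]
          exact_mod_cast Int.one_le_abs hm
        linarith
      · have hk : ((i : ℤ) - j) ≠ 0 := sub_ne_zero.2 (by exact_mod_cast hne)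
        have hkq : ((i:ℤ) - j).natAbs < q := by omega
        have h2 := hNlt ((i:ℤ) - j) hk hkq
        have h3 := c.nrm_le_abs ((i:ℤ) - j) m
        have e : ((((i:ℤ) - j : ℤ)) : ℝ) * c.θ + m = E := by push_cast; rw [hE]; ring
        rw [e] at h3
        linarith
    have htr : ∀ (n m' k l : ℤ), ((n:ℝ) * c.θ + m' ≤ (k:ℝ) * c.θ + l) →
        c.z n x + (m' : ℝ) ≤ c.z k x + (l : ℝ) :=
      fun n m' k l h => (c.ordiso_le hirr n m' k l x).2 h
    have hAzero : ∀ k : ℤ, A k = c.z (k - q) x + ((p : ℤ) : ℝ) := fun k => by rw [hA]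
    have hCzero : ∀ k : ℤ, C k = c.z k x + ((0 : ℤ) : ℝ) := fun k => by rw [hC]; push_cast; ring
    have hdabs1 : δ ≤ |δ| := le_abs_self δ
    have hdabs2 : -|δ| ≤ δ := neg_abs_le δ
    rcases le_abs'.mp habsE with hEle | hEge
    · left
      have hAA : A i + (m:ℝ) ≤ A j := by
        rw [hAzero, hAzero]
        have h0 := htr ((i:ℤ) - q) (p + m) ((j:ℤ) - q) p (by push_cast; linarith)
        push_cast at h0 ⊢
        linarith
      have hAC : A i + (m:ℝ) ≤ C j := by
        rw [hAzero, hCzero]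
        have h0 := htr ((i:ℤ) - q) (p + m) (j:ℤ) 0 (by push_cast; linarith)
        push_cast at h0 ⊢
        linarith
      have hCA : C i + (m:ℝ) ≤ A j := by
        rw [hCzero, hAzero]
        have h0 := htr (i:ℤ) m ((j:ℤ) - q) p (by push_cast; linarith)
        push_cast at h0 ⊢
        linarith
      have hCC : C i + (m:ℝ) ≤ C j := by
        rw [hCzero, hCzero]
        have h0 := htr (i:ℤ) m (j:ℤ) 0 (by push_cast; linarith)
        push_cast at h0 ⊢
        linarith
      calc max (A i) (C i) + (m:ℝ) = max (A i + (m:ℝ)) (C i + (m:ℝ)) := by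
            rw [max_add_add_right]
        _ ≤ min (A j) (C j) := max_le (le_min hAA hAC) (le_min hCA hCC)
    · right
      have hAA : A j ≤ A i + (m:ℝ) := by
        rw [hAzero, hAzero]
        have h0 := htr ((j:ℤ) - q) p ((i:ℤ) - q) (p + m) (by push_cast; linarith)
        push_cast at h0 ⊢
        linarith
      have hAC : A j ≤ C i + (m:ℝ) := by
        rw [hAzero, hCzero]
        have h0 := htr ((j:ℤ) - q) p (i:ℤ) m (by push_cast; linarith)
        push_cast at h0 ⊢
        linarith
      have hCA : C j ≤ A i + (m:ℝ) := by
        rw [hCzero, hAzero]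
        have h0 := htr (j:ℤ) 0 ((i:ℤ) - q) (p + m) (by push_cast; linarith)
        push_cast at h0 ⊢
        linarith
      have hCC : C j ≤ C i + (m:ℝ) := by
        rw [hCzero, hCzero]
        have h0 := htr (j:ℤ) 0 (i:ℤ) m (by push_cast; linarith)
        push_cast at h0 ⊢
        linarith
      calc max (A j) (C j) ≤ min (A i + (m:ℝ)) (C i + (m:ℝ)) :=
            max_le (le_min hAA hAC) (le_min hCA hCC)
        _ = min (A i) (C i) + (m:ℝ) := by rw [min_add_add_right]
  -- sum of lengths
  have hsum : ∑ i ∈ Finset.range q, (max (A i) (C i) - min (A i) (C i)) ≤ 2 := by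
    refine sum_len_le (Finset.range q) _ _ (fun i _ => min_le_max) ?_
    intro i hi j hj m hij
    refine hsep i hi j hj m ?_
    rcases hij with h | h
    · left; exact fun hc => h (by exact_mod_cast hc)
    · right; exact h
  have habssum : ∑ i ∈ Finset.range q, |C i - A i| ≤ 2 := by
    refine le_trans (le_of_eq (Finset.sum_congr rfl fun i _ => ?_)) hsum
    rw [← max_sub_min_eq_abs]
  -- the point y
  set y : ℝ := c.z (-(q:ℤ)) x + p with hy
  have hiterx : ∀ i : ℕ, (⇑c.g)^[i] x = C i := by
    intro i
    rw [hC, ← c.z_natCast]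
  have hitery : ∀ i : ℕ, (⇑c.g)^[i] y = A i := by
    intro i
    rw [hA, hy, ← c.z_natCast, c.z_int, ← c.z_add]
    norm_num
    rw [show (i : ℤ) + -(q:ℤ) = (i:ℤ) - q by ring]
  -- distortion bound
  have hdist : |Real.log (c.Pp q x) - Real.log (c.Pp q y)| ≤ 2 * M := by
    rw [c.log_Pp hc2 hc2', c.log_Pp hc2 hc2', ← Finset.sum_sub_distrib]
    refine le_trans (Finset.abs_sum_le_sum_abs _ _) ?_
    have hterm : ∀ i ∈ Finset.range q,
        |Real.log (c.dg ((⇑c.g)^[i] x)) - Real.log (c.dg ((⇑c.g)^[i] y))| ≤ M * |C i - A i| := by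
      intro i _
      rw [hiterx, hitery]
      exact hMlip _ _
    refine le_trans (Finset.sum_le_sum hterm) ?_
    rw [← Finset.mul_sum]
    calc M * ∑ i ∈ Finset.range q, |C i - A i| ≤ M * 2 := by
          exact mul_le_mul_of_nonneg_left habssum hM0
      _ = 2 * M := by ring
  -- identify Pp q y with 1 / Sp q x
  have hyiter : y = (⇑c.g.symm)^[q] x + p := by rw [hy, ← c.z_neg_natCast]
  have hPy : c.Pp q y * c.Sp q x = 1 := by
    rw [hyiter, c.Pp_int hc2 hc2']
    exact c.PS1 hc2 hc2' q x
  -- conclude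
  have hPx := c.Pp_pos hc2 hc2' q x
  have hPy' := c.Pp_pos hc2 hc2' q y
  have hSx := c.Sp_pos hc2 hc2' q x
  have hlog : -(2 * M) ≤ Real.log (c.Pp q x * c.Sp q x) := by
    rw [Real.log_mul hPx.ne' hSx.ne']
    have e : Real.log (c.Sp q x) = - Real.log (c.Pp q y) := by
      have : c.Sp q x = (c.Pp q y)⁻¹ := by
        field_simp at hPy ⊢
        linarith [hPy]
      rw [this, Real.log_inv]
    rw [e]
    have := abs_le.1 hdist
    linarith [this.1]
  calc Real.exp (-(2 * M)) ≤ Real.exp (Real.log (c.Pp q x * c.Sp q x)) :=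
        Real.exp_le_exp.2 hlog
    _ = c.Pp q x * c.Sp q x := Real.exp_log (by positivity)

end key

end Ctx

/-! ### Stage 6: Denjoy theorem (minimality) -/

namespace Ctx

variable (c : Ctx)

lemma z_cont (hg : Continuous ⇑c.g) (hg' : Continuous ⇑c.g.symm) (n : ℤ) :
    Continuous (c.z n) := by
  rcases le_or_gt 0 n with h | h
  · have e : n = ((n.toNat : ℕ) : ℤ) := by omega
    rw [e, z_natCast]
    exact hg.iterate _
  · have e : n = -(((-n).toNat : ℕ) : ℤ) := by omega
    rw [e, z_neg_natCast]
    exact hg'.iterate _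

lemma Pp_cont (hc2 : ContDiff ℝ 2 ⇑c.g) (hc2' : ContDiff ℝ 2 ⇑c.g.symm) (n : ℕ) :
    Continuous (c.Pp n) := by
  refine continuous_finset_prod _ fun i _ => ?_
  exact (c.dg_cont hc2 hc2').comp (hc2.continuous.iterate i)

lemma Sp_cont (hc2 : ContDiff ℝ 2 ⇑c.g) (hc2' : ContDiff ℝ 2 ⇑c.g.symm) (n : ℕ) :
    Continuous (c.Sp n) := by
  refine continuous_finset_prod _ fun i _ => ?_
  exact (c.ds_cont hc2 hc2').comp (hc2'.continuous.iterate i)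

/-- Denjoy's theorem: every orbit is dense. -/
lemma minimal (hirr : ∀ q : ℤ, q ≠ 0 → ∀ p : ℤ, (q : ℝ) * c.θ ≠ p)
    (hc2 : ContDiff ℝ 2 ⇑c.g) (hc2' : ContDiff ℝ 2 ⇑c.g.symm) (x₀ y : ℝ) {ε : ℝ}
    (hε : 0 < ε) : ∃ n m : ℤ, |c.z n x₀ + m - y| < ε := by
  by_contra hcon
  push_neg at hcon
  set O : Set ℝ := {w | ∃ n m : ℤ, c.z n x₀ + m = w} with hO
  set K : Set ℝ := closure O with hK
  have hyK : y ∉ K := by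
    intro hy
    rw [hK, Metric.mem_closure_iff] at hy
    obtain ⟨w, hwO, hwd⟩ := hy ε hε
    obtain ⟨n, m, rfl⟩ := hwO
    rw [Real.dist_eq, abs_sub_comm] at hwd
    exact absurd hwd (not_lt.2 (hcon n m))
  have hOne : O.Nonempty := ⟨x₀, 0, 0, by simp⟩
  have hOinv : ∀ w ∈ O, ∀ k l : ℤ, c.z k w + l ∈ O := by
    rintro w ⟨n, m, rfl⟩ k l
    exact ⟨k + n, m + l, by rw [c.z_add, c.z_int]; push_cast; ring⟩
  have hKinv : ∀ w ∈ K, ∀ k l : ℤ, c.z k w + l ∈ K := by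
    intro w hw k l
    have hf : Continuous fun t => c.z k t + (l : ℝ) :=
      (c.z_cont hc2.continuous hc2'.continuous k).add continuous_const
    have h1 : (fun t => c.z k t + (l:ℝ)) w ∈ closure ((fun t => c.z k t + (l:ℝ)) '' O) := by
      apply image_closure_subset_closure_image hf
      exact Set.mem_image_of_mem _ hw
    refine closure_mono ?_ h1
    rintro v ⟨u, huO, rfl⟩
    exact hOinv u huO k l
  -- gap around y
  have hne1 : (K ∩ Set.Iic y).Nonempty := by
    refine ⟨x₀ + (⌊y - x₀⌋ : ℤ), subset_closure ⟨0, ⌊y - x₀⌋, by simp⟩, ?_⟩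
    have := Int.floor_le (y - x₀)
    simp only [Set.mem_Iic]
    linarith
  have hne2 : (K ∩ Set.Ici y).Nonempty := by
    refine ⟨x₀ + (⌈y - x₀⌉ : ℤ), subset_closure ⟨0, ⌈y - x₀⌉, by simp⟩, ?_⟩
    have := Int.le_ceil (y - x₀)
    simp only [Set.mem_Ici]
    linarith
  set a : ℝ := sSup (K ∩ Set.Iic y) with ha
  set b : ℝ := sInf (K ∩ Set.Ici y) with hb
  have haK : a ∈ K ∩ Set.Iic y :=
    (isClosed_closure.inter isClosed_Iic).csSup_mem hne1 ⟨y, fun w hw => hw.2⟩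
  have hbK : b ∈ K ∩ Set.Ici y :=
    (isClosed_closure.inter isClosed_Ici).csInf_mem hne2 ⟨y, fun w hw => hw.2⟩
  have hay : a < y := lt_of_le_of_ne haK.2 (fun h => hyK (h ▸ haK.1))
  have hyb : y < b := lt_of_le_of_ne (hbK.2) (fun h => hyK (h.symm ▸ hbK.1))
  have hgap : ∀ w ∈ K, w ∉ Set.Ioo a b := by
    intro w hw hwab
    rcases le_or_gt w y with h | h
    · have : w ≤ a := le_csSup ⟨y, fun v hv => hv.2⟩ ⟨hw, h⟩
      exact absurd hwab.1 (not_lt.2 this)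
    · have : b ≤ w := csInf_le ⟨y, fun v hv => hv.2⟩ ⟨hw, h.le⟩
      exact absurd hwab.2 (not_lt.2 this)
  have haltb : a < b := lt_trans hay hyb
  -- the translated gaps
  set aa : ℤ → ℝ := fun n => c.z n a with haa
  set bb : ℤ → ℝ := fun n => c.z n b with hbb
  have hab : ∀ n : ℤ, aa n < bb n := fun n => c.z_sm n haltb
  have haaK : ∀ n m : ℤ, aa n + m ∈ K := by
    intro n m
    have := hKinv a haK.1 n m
    rwa [haa]
  have hbbK : ∀ n m : ℤ, bb n + m ∈ K := by
    intro n m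
    have := hKinv b hbK.1 n m
    rwa [hbb]
  have hgap_n : ∀ (n m : ℤ) (w : ℝ), w ∈ K → ¬(aa n + m < w ∧ w < bb n + m) := by
    rintro n m w hw ⟨h1, h2⟩
    have h1' : a + m < c.z (-n) w := by
      have := c.z_sm (-n) h1
      rwa [haa, c.z_int, c.z_neg_z] at this
    have h2' : c.z (-n) w < b + m := by
      have := c.z_sm (-n) h2
      rwa [hbb, c.z_int, c.z_neg_z] at this
    have hmem : c.z (-n) w + (-m : ℤ) ∈ K := hKinv w hw (-n) (-m)
    refine hgap _ hmem ⟨?_, ?_⟩ <;> push_cast <;> linarith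
  have hdisj : ∀ (n m k l : ℤ), (n, m) ≠ (k, l) →
      bb n + m ≤ aa k + l ∨ bb k + l ≤ aa n + m := by
    intro n m k l hne
    by_contra hcon2
    push_neg at hcon2
    obtain ⟨h1, h2⟩ := hcon2
    rcases lt_trichotomy (aa n + (m:ℝ)) (aa k + l) with h | h | h
    · exact hgap_n n m (aa k + l) (haaK k l) ⟨h, h1⟩
    · rw [haa] at h
      have := c.rot_inj hirr ((c.ordiso_eq hirr n m k l a).1 h)
      exact hne (by rw [this.1, this.2])
    · exact hgap_n k l (aa n + m) (haaK n m) ⟨h, h2⟩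
  -- total length bound
  have hlensum : ∀ t : Finset ℤ, ∑ n ∈ t, (bb n - aa n) ≤ 2 := by
    intro t
    refine sum_len_le t aa bb (fun n _ => (hab n).le) ?_
    intro i hi j hj m hij
    have h := hdisj i m j 0 ?_
    · push_cast at h
      rcases h with h | h
      · left; linarith
      · right; linarith
    · rcases hij with h | h
      · simp [h]
      · simp [h]
  -- Lipschitz constant
  obtain ⟨M, hM0, hMlip⟩ := c.logdg_lip hc2 hc2'
  set c₀ : ℝ := 2 * Real.exp (-M) * (b - a) with hc₀
  have hc₀pos : 0 < c₀ := by
    have := Real.exp_pos (-M)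
    rw [hc₀]
    nlinarith
  -- a record time with small gaps
  have hrecsmall : ∃ q : ℕ, c.Rec q ∧
      (bb q - aa q) + (bb (-(q:ℤ)) - aa (-(q:ℤ))) < c₀ := by
    by_contra hcon3
    push_neg at hcon3
    choose R hR1 hR2 using fun k => c.rec_unbounded hirr k
    set r : ℕ → ℕ := fun k => R^[k + 1] 0 with hr
    have hrrec : ∀ k, c.Rec (r k) := by
      intro k
      rw [hr]
      simp only [Function.iterate_succ_apply']
      exact hR2 _
    have hrmono : StrictMono r := by
      apply strictMono_nat_of_lt_succ
      intro k
      rw [hr]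
      simp only [Function.iterate_succ_apply' R (k+1)]
      exact hR1 _
    obtain ⟨N, hN⟩ := exists_nat_gt (4 / c₀)
    have hN4 : 4 < N * c₀ := by
      rw [div_lt_iff₀ hc₀pos] at hN
      linarith
    have hsum1 : ∑ k ∈ Finset.range N, (bb (r k) - aa (r k)) ≤ 2 := by
      have hinj : ∀ x ∈ Finset.range N, ∀ y ∈ Finset.range N,
          ((r x : ℤ)) = (r y : ℤ) → x = y := by
        intro x _ y _ h
        exact hrmono.injective (by exact_mod_cast h)
      have := hlensum ((Finset.range N).image fun k => ((r k : ℕ) : ℤ))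
      rwa [Finset.sum_image hinj] at this
    have hsum2 : ∑ k ∈ Finset.range N, (bb (-(r k : ℤ)) - aa (-(r k : ℤ))) ≤ 2 := by
      have hinj : ∀ x ∈ Finset.range N, ∀ y ∈ Finset.range N,
          (-(r x : ℤ)) = (-(r y : ℤ)) → x = y := by
        intro x _ y _ h
        exact hrmono.injective (by omega)
      have := hlensum ((Finset.range N).image fun k => (-(r k : ℕ) : ℤ))
      rwa [Finset.sum_image hinj] at this
    have hlower : (N : ℝ) * c₀ ≤ ∑ k ∈ Finset.range N,
        ((bb (r k) - aa (r k)) + (bb (-(r k:ℤ)) - aa (-(r k:ℤ)))) := by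
      calc (N : ℝ) * c₀ = ∑ _k ∈ Finset.range N, c₀ := by
            rw [Finset.sum_const, Finset.card_range, nsmul_eq_mul]
        _ ≤ _ := Finset.sum_le_sum fun k _ => hcon3 (r k) (hrrec k)
    rw [Finset.sum_add_distrib] at hlower
    linarith
  obtain ⟨q, hqrec, hqsmall⟩ := hrecsmall
  -- pointwise lower bound
  have hpt : ∀ x : ℝ, 2 * Real.exp (-M) ≤ c.Pp q x + c.Sp q x := by
    intro x
    have hkey := c.key_estimate hirr hc2 hc2' hM0 hMlip hqrec x
    have hPx := c.Pp_pos hc2 hc2' q x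
    have hSx := c.Sp_pos hc2 hc2' q x
    have he : Real.exp (-(2 * M)) = Real.exp (-M) * Real.exp (-M) := by
      rw [← Real.exp_add]; ring_nf
    have hepos := Real.exp_pos (-M)
    nlinarith [sq_nonneg (c.Pp q x - c.Sp q x), sq_nonneg (c.Pp q x + c.Sp q x - 2 * Real.exp (-M))]
  -- FTC
  have hPpint : ∫ x in a..b, c.Pp q x = bb q - aa q := by
    rw [intervalIntegral.integral_eq_sub_of_hasDerivAt
      (f := (⇑c.g)^[q]) (fun x _ => c.hasPp hc2 hc2' q x)
      ((c.Pp_cont hc2 hc2' q).intervalIntegrable a b)]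
    have e1 : bb (q:ℤ) = (⇑c.g)^[q] b := by simp only [hbb]; rw [c.z_natCast]
    have e2 : aa (q:ℤ) = (⇑c.g)^[q] a := by simp only [haa]; rw [c.z_natCast]
    rw [e1, e2]
  have hSpint : ∫ x in a..b, c.Sp q x = bb (-(q:ℤ)) - aa (-(q:ℤ)) := by
    rw [intervalIntegral.integral_eq_sub_of_hasDerivAt
      (f := (⇑c.g.symm)^[q]) (fun x _ => c.hasSp hc2 hc2' q x)
      ((c.Sp_cont hc2 hc2' q).intervalIntegrable a b)]
    have e1 : bb (-(q:ℤ)) = (⇑c.g.symm)^[q] b := by simp only [hbb]; rw [c.z_neg_natCast]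
    have e2 : aa (-(q:ℤ)) = (⇑c.g.symm)^[q] a := by simp only [haa]; rw [c.z_neg_natCast]
    rw [e1, e2]
  have hmono : c₀ ≤ ∫ x in a..b, (c.Pp q x + c.Sp q x) := by
    have h1 : ∫ _x in a..b, (2 * Real.exp (-M)) = (b - a) * (2 * Real.exp (-M)) := by
      rw [intervalIntegral.integral_const, smul_eq_mul]
    have h2 := intervalIntegral.integral_mono_on (μ := MeasureTheory.volume) (a := a) (b := b)
      (f := fun _ => 2 * Real.exp (-M)) (g := fun x => c.Pp q x + c.Sp q x) haltb.le
      ((continuous_const).intervalIntegrable a b)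
      (((c.Pp_cont hc2 hc2' q).add (c.Sp_cont hc2 hc2' q)).intervalIntegrable a b)
      (fun x _ => hpt x)
    rw [h1] at h2
    rw [hc₀]
    calc 2 * Real.exp (-M) * (b - a) = (b - a) * (2 * Real.exp (-M)) := by ring
      _ ≤ _ := h2
  rw [intervalIntegral.integral_add ((c.Pp_cont hc2 hc2' q).intervalIntegrable a b)
    ((c.Sp_cont hc2 hc2' q).intervalIntegrable a b), hPpint, hSpint] at hmono
  linarith

end Ctx

/-! ### Stage 7: conjugation to a rotation, rigidity -/

namespace Ctx

variable (c : Ctx)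

/-- the set used to define the semiconjugacy -/
def V (x : ℝ) : Set ℝ := {v | ∃ n m : ℤ, v = (n:ℝ) * c.θ + m ∧ c.z n 0 + m ≤ x}

/-- the Poincaré semiconjugacy -/
def Φ (x : ℝ) : ℝ := sSup (c.V x)

lemma V_ne (x : ℝ) : (c.V x).Nonempty :=
  ⟨(⌊x⌋ : ℤ), 0, ⌊x⌋, by push_cast; ring, by simpa using Int.floor_le x⟩

section hirr

variable (hirr : ∀ q : ℤ, q ≠ 0 → ∀ p : ℤ, (q : ℝ) * c.θ ≠ p)
include hirr

lemma V_bdd (x : ℝ) : BddAbove (c.V x) := by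
  refine ⟨(⌈x⌉ : ℤ) + 1, ?_⟩
  rintro v ⟨n, m, rfl, hnm⟩
  have hlt : c.z n 0 + (m : ℝ) < c.z 0 0 + ((⌈x⌉ + 1 : ℤ) : ℝ) := by
    rw [c.z_zero]
    push_cast
    have := Int.le_ceil x
    linarith
  have := (c.ordiso_lt hirr n m 0 (⌈x⌉ + 1) 0).1 hlt
  push_cast at this ⊢
  linarith

lemma Φ_mono : Monotone c.Φ := by
  intro x y hxy
  refine csSup_le_csSup (c.V_bdd hirr y) (c.V_ne x) ?_
  rintro v ⟨n, m, rfl, hnm⟩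
  exact ⟨n, m, rfl, le_trans hnm hxy⟩

lemma Φ_orbit (k l : ℤ) : c.Φ (c.z k 0 + l) = (k:ℝ) * c.θ + l := by
  apply le_antisymm
  · refine csSup_le (c.V_ne _) ?_
    rintro v ⟨n, m, rfl, hnm⟩
    exact (c.ordiso_le hirr n m k l 0).1 hnm
  · exact le_csSup (c.V_bdd hirr _) ⟨k, l, rfl, le_rfl⟩

lemma Φ_g (x : ℝ) : c.Φ (c.g x) = c.Φ x + c.θ := by
  apply le_antisymm
  · refine csSup_le (c.V_ne _) ?_
    rintro v ⟨n, m, rfl, hnm⟩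
    have h1 : c.z (n - 1) 0 + (m : ℝ) ≤ x := by
      have h2 := (c.z_sm (-1)).monotone hnm
      rw [c.z_int] at h2
      rw [← c.z_add] at h2
      rw [show (-1) + n = n - 1 by ring] at h2
      have h3 : c.z (-1) (c.g x) = x := by
        have := c.z_neg_z 1 x
        rwa [c.z_one] at this
      rwa [h3] at h2
    have h4 : ((n - 1 : ℤ) : ℝ) * c.θ + m ≤ c.Φ x :=
      le_csSup (c.V_bdd hirr _) ⟨n - 1, m, rfl, h1⟩
    push_cast at h4
    linarith
  · have h5 : ∀ v ∈ c.V x, v ≤ c.Φ (c.g x) - c.θ := by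
      rintro v ⟨n, m, rfl, hnm⟩
      have h1 : c.z (n + 1) 0 + (m : ℝ) ≤ c.g x := by
        have h2 := c.hsm.monotone hnm
        have e1 : c.g (c.z n 0 + (m:ℝ)) = c.g (c.z n 0) + m := by
          have h := c.z_int 1 (c.z n 0) m
          rw [c.z_one, c.z_one] at h
          exact h
        have e2 : c.g (c.z n 0) = c.z (n + 1) 0 := by
          have h := c.z_add 1 n 0
          rw [c.z_one] at h
          rw [← h]
          congr 1
          ring
        rw [e1, e2] at h2
        exact h2
      have h4 : ((n + 1 : ℤ) : ℝ) * c.θ + m ≤ c.Φ (c.g x) :=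
        le_csSup (c.V_bdd hirr _) ⟨n + 1, m, rfl, h1⟩
      push_cast at h4
      linarith
    have h6 := csSup_le (c.V_ne x) h5
    change c.Φ x ≤ _ at h6
    linarith

lemma Φ_per (x : ℝ) : c.Φ (x + 1) = c.Φ x + 1 := by
  apply le_antisymm
  · refine csSup_le (c.V_ne _) ?_
    rintro v ⟨n, m, rfl, hnm⟩
    have h1 : c.z n 0 + ((m - 1 : ℤ) : ℝ) ≤ x := by push_cast; linarith
    have h4 : ((n : ℤ) : ℝ) * c.θ + ((m - 1 : ℤ) : ℝ) ≤ c.Φ x :=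
      le_csSup (c.V_bdd hirr _) ⟨n, m - 1, rfl, h1⟩
    push_cast at h4 ⊢
    linarith
  · have h5 : ∀ v ∈ c.V x, v ≤ c.Φ (x + 1) - 1 := by
      rintro v ⟨n, m, rfl, hnm⟩
      have h1 : c.z n 0 + ((m + 1 : ℤ) : ℝ) ≤ x + 1 := by push_cast; linarith
      have h4 : ((n : ℤ) : ℝ) * c.θ + ((m + 1 : ℤ) : ℝ) ≤ c.Φ (x + 1) :=
        le_csSup (c.V_bdd hirr _) ⟨n, m + 1, rfl, h1⟩
      push_cast at h4
      linarith
    have h6 := csSup_le (c.V_ne x) h5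
    change c.Φ x ≤ _ at h6
    linarith

variable (hden : ∀ (x y : ℝ), ∀ {ε : ℝ}, 0 < ε → ∃ n m : ℤ, |c.z n x + m - y| < ε)
include hden

lemma Φ_sm : StrictMono c.Φ := by
  intro x y hxy
  obtain ⟨n1, m1, hp1⟩ := hden 0 ((x + y) / 2) (by linarith : (0:ℝ) < (y - x) / 2)
  set p1 := c.z n1 0 + (m1 : ℝ) with hp1def
  have hp1mem : x < p1 ∧ p1 < y := by
    rw [abs_lt] at hp1
    constructor <;> [linarith [hp1.1]; linarith [hp1.2]]
  obtain ⟨n2, m2, hp2⟩ := hden 0 ((p1 + y) / 2) (by linarith [hp1mem.2] : (0:ℝ) < (y - p1) / 2)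
  set p2 := c.z n2 0 + (m2 : ℝ) with hp2def
  have hp2mem : p1 < p2 ∧ p2 < y := by
    rw [abs_lt] at hp2
    constructor <;> [linarith [hp2.1]; linarith [hp2.2]]
  have h1 : c.Φ x ≤ (n1:ℝ) * c.θ + m1 := by
    refine csSup_le (c.V_ne x) ?_
    rintro v ⟨n, m, rfl, hnm⟩
    exact ((c.ordiso_le hirr n m n1 m1 0).1 (le_trans hnm (le_of_lt hp1mem.1)))
  have h2 : ((n1:ℝ) * c.θ + m1) < ((n2:ℝ) * c.θ + m2) :=
    (c.ordiso_lt hirr n1 m1 n2 m2 0).1 hp2mem.1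
  have h3 : ((n2:ℝ) * c.θ + m2) ≤ c.Φ y :=
    le_csSup (c.V_bdd hirr y) ⟨n2, m2, rfl, le_of_lt hp2mem.2⟩
  linarith

lemma Φ_cont : Continuous c.Φ := by
  refine (c.Φ_mono hirr).continuous_of_denseRange ?_
  rw [DenseRange, Metric.dense_iff]
  intro t r hr
  obtain ⟨n, m, hnm⟩ := c.rotdense hirr t hr
  refine ⟨(n:ℝ) * c.θ + m, ?_, ?_⟩
  · rw [Metric.mem_ball, Real.dist_eq]
    exact hnm
  · exact ⟨c.z n 0 + m, c.Φ_orbit hirr n m⟩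

lemma Φ_surj : Function.Surjective c.Φ := by
  intro t
  obtain ⟨n1, m1, h1⟩ := c.rotdense hirr (t - 1) (by norm_num : (0:ℝ) < 1/2)
  obtain ⟨n2, m2, h2⟩ := c.rotdense hirr (t + 1) (by norm_num : (0:ℝ) < 1/2)
  rw [abs_lt] at h1 h2
  set p1 := c.z n1 0 + (m1 : ℝ)
  set p2 := c.z n2 0 + (m2 : ℝ)
  have hv1 : c.Φ p1 = (n1:ℝ) * c.θ + m1 := c.Φ_orbit hirr n1 m1
  have hv2 : c.Φ p2 = (n2:ℝ) * c.θ + m2 := c.Φ_orbit hirr n2 m2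
  have hle : p1 ≤ p2 := by
    by_contra hgt
    push_neg at hgt
    have := (c.Φ_mono hirr) hgt.le
    rw [hv1, hv2] at this
    linarith
  have ht : t ∈ Set.Icc (c.Φ p1) (c.Φ p2) := by
    rw [hv1, hv2]
    constructor <;> linarith
  obtain ⟨x, -, hx⟩ := intermediate_value_Icc hle ((c.Φ_cont hirr hden).continuousOn) ht
  exact ⟨x, hx⟩

/-- rigidity: any lift commuting with g is conjugated by Φ to a translation -/
lemma commuting_rigid {F : ℝ → ℝ} (hFcont : Continuous F)
    (hFg : ∀ x, F (c.g x) = c.g (F x)) (hFper : ∀ x, F (x + 1) = F x + 1) :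
    ∀ x, c.Φ (F x) = c.Φ x + c.Φ (F 0) := by
  set e : ℝ → ℝ := fun x => c.Φ (F x) - c.Φ x with he
  have hecont : Continuous e := by
    exact ((c.Φ_cont hirr hden).comp hFcont).sub (c.Φ_cont hirr hden)
  have heg : ∀ x, e (c.g x) = e x := by
    intro x
    rw [he]
    simp only []
    rw [hFg, c.Φ_g hirr, c.Φ_g hirr]
    ring
  have hep : ∀ x, e (x + 1) = e x := by
    intro x
    rw [he]
    simp only []
    rw [hFper, c.Φ_per hirr, c.Φ_per hirr]
    ring
  have hezn : ∀ (n : ℤ) (x : ℝ), e (c.z n x) = e x := by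
    intro n
    induction n using Int.induction_on with
    | zero => intro x; rw [c.z_zero]
    | succ k ih =>
      intro x
      have h1 : c.z ((k:ℤ) + 1) x = c.g (c.z (k:ℤ) x) := by
        rw [show ((k:ℤ) + 1) = 1 + (k:ℤ) by ring, c.z_add, c.z_one]
      rw [h1, heg, ih]
    | pred k ih =>
      intro x
      have h1 : c.g (c.z (-(k:ℤ) - 1) x) = c.z (-(k:ℤ)) x := by
        rw [← c.z_one (c.z (-(k:ℤ) - 1) x), ← c.z_add]
        congr 1
        ring
      calc e (c.z (-(k:ℤ) - 1) x) = e (c.g (c.z (-(k:ℤ) - 1) x)) := (heg _).symm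
        _ = e (c.z (-(k:ℤ)) x) := by rw [h1]
        _ = e x := ih x
  have hdense : Dense {w : ℝ | ∃ n m : ℤ, c.z n 0 + m = w} := by
    rw [Metric.dense_iff]
    intro t r hr
    obtain ⟨n, m, h⟩ := hden 0 t hr
    exact ⟨c.z n 0 + m, Metric.mem_ball.2 (by rw [Real.dist_eq]; exact h), ⟨n, m, rfl⟩⟩
  have heqon : Set.EqOn e (fun _ => e 0) {w : ℝ | ∃ n m : ℤ, c.z n 0 + m = w} := by
    rintro w ⟨n, m, rfl⟩
    have h1 : e (c.z n 0 + (m:ℝ)) = e (c.z n 0) := per_int hep m (c.z n 0)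
    have h2 : e (c.z n 0) = e 0 := hezn n 0
    simp only []
    rw [h1, h2]
  have heeq := Continuous.ext_on hdense hecont continuous_const heqon
  have hΦ0 : c.Φ 0 = 0 := by
    have h := c.Φ_orbit hirr 0 0
    simpa using h
  intro x
  have h3 : e x = e 0 := congrFun heeq x
  rw [he] at h3
  simp only [] at h3
  rw [hΦ0] at h3
  linarith

end hirr

end Ctx

/-! ### Stage 8: translation number bookkeeping -/

lemma tau_comm (u : CircleDeg1Liftˣ) (W : CircleDeg1Lift) :
    CircleDeg1Lift.translationNumber (↑u * W) =
    CircleDeg1Lift.translationNumber (W * ↑u) := by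
  have e : ↑u * (W * ↑u) * ↑u⁻¹ = ↑u * W := by
    rw [mul_assoc, mul_assoc, Units.mul_inv, mul_one]
  calc CircleDeg1Lift.translationNumber (↑u * W)
      = CircleDeg1Lift.translationNumber (↑u * (W * ↑u) * ↑u⁻¹) := by rw [e]
    _ = CircleDeg1Lift.translationNumber (W * ↑u) :=
        CircleDeg1Lift.translationNumber_conj_eq u _

/-- a lift from data -/
def mkL (f : ℝ → ℝ) (h1 : Monotone f) (h2 : ∀ x, f (x + 1) = f x + 1) : CircleDeg1Lift :=
  ⟨⟨f, h1⟩, h2⟩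

@[simp] lemma mkL_apply (f : ℝ → ℝ) (h1 : Monotone f) (h2 : ∀ x, f (x + 1) = f x + 1) (x : ℝ) :
    mkL f h1 h2 x = f x := rfl

/-- a unit from an order-preserving periodic equivalence -/
def mkU (f : ℝ ≃ ℝ) (hsm : StrictMono ⇑f) (hper : ∀ x, f (x + 1) = f x + 1) :
    CircleDeg1Liftˣ where
  val := mkL ⇑f hsm.monotone hper
  inv := mkL ⇑f.symm (symm_strictMono hsm).monotone (symm_per hper)
  val_inv := CircleDeg1Lift.ext fun x => f.apply_symm_apply x
  inv_val := CircleDeg1Lift.ext fun x => f.symm_apply_apply x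

@[simp] lemma mkU_apply (f : ℝ ≃ ℝ) (hsm : StrictMono ⇑f) (hper : ∀ x, f (x + 1) = f x + 1)
    (x : ℝ) : ((mkU f hsm hper : CircleDeg1Liftˣ) : CircleDeg1Lift) x = f x := rfl

@[simp] lemma mkU_inv_apply (f : ℝ ≃ ℝ) (hsm : StrictMono ⇑f) (hper : ∀ x, f (x + 1) = f x + 1)
    (x : ℝ) : (((mkU f hsm hper)⁻¹ : CircleDeg1Liftˣ) : CircleDeg1Lift) x = f.symm x := rfl

namespace Ctx

variable (c : Ctx)

/-- a lift commuting with g up to an integer in fact commutes with g -/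
lemma comm_exact {h : ℝ → ℝ} (hmono : Monotone h) (hperh : ∀ x, h (x + 1) = h x + 1)
    {n : ℤ} (hcomm : ∀ x, c.g (h x) = h (c.g x) + n) : ∀ x, c.g (h x) = h (c.g x) := by
  set Hl : CircleDeg1Lift := mkL h hmono hperh with hHl
  set T : CircleDeg1Lift := ((CircleDeg1Lift.translate (Multiplicative.ofAdd (n : ℝ)) : CircleDeg1Liftˣ) : CircleDeg1Lift) with hT
  have e1 : (↑c.U : CircleDeg1Lift) * Hl = T * (Hl * (↑c.U : CircleDeg1Lift)) := by
    refine CircleDeg1Lift.ext fun x => ?_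
    show c.g (h x) = T (h (c.g x))
    rw [hT, CircleDeg1Lift.translate_apply, hcomm x]
    ring
  have hcommute : Commute T (Hl * (↑c.U : CircleDeg1Lift)) := by
    refine CircleDeg1Lift.ext fun x => ?_
    show T (h (c.g x)) = h (c.g (T x))
    rw [hT, CircleDeg1Lift.translate_apply, CircleDeg1Lift.translate_apply]
    have h1 : c.g ((n:ℝ) + x) = (n:ℝ) + c.g x := CircleDeg1Lift.map_int_add (↑c.U) n x
    rw [h1]
    have h2 : h ((n:ℝ) + c.g x) = (n:ℝ) + h (c.g x) := CircleDeg1Lift.map_int_add Hl n (c.g x)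
    rw [h2]
  have e2 := CircleDeg1Lift.translationNumber_mul_of_commute hcommute
  have e3 : CircleDeg1Lift.translationNumber T = (n : ℝ) := by
    rw [hT]
    exact CircleDeg1Lift.translationNumber_translate _
  have e4 := tau_comm c.U Hl
  rw [e1, e2, e3] at e4
  have hn0 : (n : ℝ) = 0 := by linarith
  have hn : n = 0 := by exact_mod_cast hn0
  intro x
  rw [hcomm x, hn]
  push_cast
  ring

end Ctx

end Cor211

/-- The lift of an orientation-preserving C² diffeomorphism of the circle S¹ = ℝ/ℤ:
a strictly monotone bijection of ℝ commuting with integer translation, C² with C² inverse. -/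
def IsCircleDiffLift (g : ℝ ≃ ℝ) : Prop :=
  StrictMono ⇑g ∧ (∀ x : ℝ, g (x + 1) = g x + 1) ∧
  ContDiff ℝ 2 ⇑g ∧ ContDiff ℝ 2 ⇑g.symm

/-- Corollary 2.11: a C² circle diffeomorphism with nonabelian centralizer in Diff₊²(S¹)
has rational rotation number; equivalently some power g^k (k ≥ 1) has a fixed point.
(Circle diffeomorphisms commute iff their lifts commute up to an integer translation.) -/
theorem nonabelian_centralizer_rational_rotation (g : ℝ ≃ ℝ) (hg : IsCircleDiffLift g)
    (hna : ∃ h₁ h₂ : ℝ ≃ ℝ, IsCircleDiffLift h₁ ∧ IsCircleDiffLift h₂ ∧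
      (∃ n : ℤ, ∀ x : ℝ, g (h₁ x) = h₁ (g x) + n) ∧
      (∃ n : ℤ, ∀ x : ℝ, g (h₂ x) = h₂ (g x) + n) ∧
      (∀ n : ℤ, ∃ x : ℝ, h₁ (h₂ x) ≠ h₂ (h₁ x) + n)) :
    ∃ k : ℕ, 0 < k ∧ ∃ x : ℝ, ∃ m : ℤ, (⇑g)^[k] x = x + m := by
  classical
  obtain ⟨hsm, hper, hc2, hc2'⟩ := hg
  by_contra hcon
  push_neg at hcon
  set c : Cor211.Ctx := ⟨g, hsm, hper⟩ with hc
  have hgc : c.g = g := rfl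
  -- irrationality of the rotation number
  have hirr : ∀ q : ℤ, q ≠ 0 → ∀ p : ℤ, (q : ℝ) * c.θ ≠ p := by
    intro q hq p hqp
    have key : ∀ (q' : ℕ) (p' : ℤ), 0 < q' → ((q' : ℝ) * c.θ = (p' : ℝ)) → False := by
      intro q' p' hq' heq
      have hτ : CircleDeg1Lift.translationNumber (↑c.U : CircleDeg1Lift) = (p' : ℝ) / q' := by
        rw [eq_div_iff (by exact_mod_cast hq'.ne' : ((q' : ℝ)) ≠ 0)]
        rw [mul_comm]
        exact heq
      have hcontU : Continuous (↑c.U : CircleDeg1Lift) := hc2.continuous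
      obtain ⟨x, hx⟩ :=
        ((↑c.U : CircleDeg1Lift).translationNumber_eq_rat_iff hcontU hq').1 hτ
      have hx' : (⇑g)^[q'] x = x + p' := by
        rw [CircleDeg1Lift.coe_pow] at hx
        exact hx
      exact hcon q' hq' x p' hx'
    rcases lt_trichotomy q 0 with h | h | h
    · refine key (-q).toNat (-p) (by omega) ?_
      have e : (((-q).toNat : ℕ) : ℝ) = -(q : ℝ) := by
        have := Int.toNat_of_nonneg (by omega : (0:ℤ) ≤ -q)
        exact_mod_cast this
      rw [e]
      push_cast
      linarith [hqp]
    · exact hq h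
    · refine key q.toNat p (by omega) ?_
      have e : ((q.toNat : ℕ) : ℝ) = (q : ℝ) := by
        have := Int.toNat_of_nonneg (by omega : (0:ℤ) ≤ q)
        exact_mod_cast this
      rw [e]
      exact hqp
  have hden : ∀ (x y : ℝ), ∀ {ε : ℝ}, 0 < ε → ∃ n m : ℤ, |c.z n x + m - y| < ε :=
    c.minimal hirr hc2 hc2'
  -- the two commuting diffeomorphisms
  obtain ⟨h₁, h₂, ⟨hsm1, hper1, hc21, hc21'⟩, ⟨hsm2, hper2, hc22, hc22'⟩,
    ⟨n1, hn1⟩, ⟨n2, hn2⟩, hnc⟩ := hna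
  have hcomm1 : ∀ x, g (h₁ x) = h₁ (g x) := c.comm_exact hsm1.monotone hper1 hn1
  have hcomm2 : ∀ x, g (h₂ x) = h₂ (g x) := c.comm_exact hsm2.monotone hper2 hn2
  set F : ℝ → ℝ := fun x => h₁ (h₂ x) with hF
  set G' : ℝ → ℝ := fun x => h₂ (h₁ x) with hG'
  have hFcont : Continuous F := hc21.continuous.comp hc22.continuous
  have hGcont : Continuous G' := hc22.continuous.comp hc21.continuous
  have hFper : ∀ x, F (x + 1) = F x + 1 := fun x => by rw [hF]; simp only []; rw [hper2, hper1]
  have hGper : ∀ x, G' (x + 1) = G' x + 1 := fun x => by rw [hG']; simp only []; rw [hper1, hper2]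
  have hFg : ∀ x, F (c.g x) = c.g (F x) := by
    intro x
    show h₁ (h₂ (g x)) = g (h₁ (h₂ x))
    rw [← hcomm2 x, ← hcomm1 (h₂ x)]
  have hGg : ∀ x, G' (c.g x) = c.g (G' x) := by
    intro x
    show h₂ (h₁ (g x)) = g (h₂ (h₁ x))
    rw [← hcomm1 x, ← hcomm2 (h₁ x)]
  have hFrig := c.commuting_rigid hirr hden hFcont hFg hFper
  have hGrig := c.commuting_rigid hirr hden hGcont hGg hGper
  -- Φ as a unit
  have hΦsm : StrictMono c.Φ := c.Φ_sm hirr hden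
  have hΦsurj : Function.Surjective c.Φ := c.Φ_surj hirr hden
  set Φe : ℝ ≃ ℝ := Equiv.ofBijective c.Φ ⟨hΦsm.injective, hΦsurj⟩ with hΦe
  have hΦecoe : ⇑Φe = c.Φ := rfl
  have hΦesm : StrictMono ⇑Φe := hΦsm
  have hΦeper : ∀ x, Φe (x + 1) = Φe x + 1 := fun x => c.Φ_per hirr x
  set ΦL : CircleDeg1Lift := Cor211.mkL ⇑Φe hΦesm.monotone hΦeper with hΦL
  set ΨL : CircleDeg1Lift := Cor211.mkL ⇑Φe.symm
    (Cor211.symm_strictMono hΦesm).monotone (Cor211.symm_per hΦeper) with hΨL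
  set ΦU : CircleDeg1Liftˣ :=
    ⟨ΦL, ΨL, CircleDeg1Lift.ext fun x => Φe.apply_symm_apply x,
      CircleDeg1Lift.ext fun x => Φe.symm_apply_apply x⟩ with hΦU
  -- the lifts of h₁, h₂
  set H1 : CircleDeg1Lift := Cor211.mkL ⇑h₁ hsm1.monotone hper1 with hH1
  set H2 : CircleDeg1Lift := Cor211.mkL ⇑h₂ hsm2.monotone hper2 with hH2
  have hH1U : IsUnit H1 := CircleDeg1Lift.isUnit_iff_bijective.2 h₁.bijective
  -- conjugation computation
  have hconj : ∀ (W : CircleDeg1Lift) (cc : ℝ), (∀ x, c.Φ (W x) = c.Φ x + cc) →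
      CircleDeg1Lift.translationNumber W = cc := by
    intro W cc hW
    have e1 : ↑ΦU * W * ↑ΦU⁻¹ =
        ((CircleDeg1Lift.translate (Multiplicative.ofAdd cc) : CircleDeg1Liftˣ) :
          CircleDeg1Lift) := by
      refine CircleDeg1Lift.ext fun y => ?_
      rw [CircleDeg1Lift.mul_apply, CircleDeg1Lift.mul_apply,
        CircleDeg1Lift.translate_apply]
      show ΦL (W (ΨL y)) = cc + y
      have e2 : ΦL (W (ΨL y)) = c.Φ (W (Φe.symm y)) := rfl
      rw [e2, hW]
      have e3 : c.Φ (Φe.symm y) = y := Φe.apply_symm_apply y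
      rw [e3]
      ring
    have := CircleDeg1Lift.translationNumber_conj_eq ΦU W
    rw [e1] at this
    rw [← this]
    exact CircleDeg1Lift.translationNumber_translate cc
  have hτF : CircleDeg1Lift.translationNumber (H1 * H2) = c.Φ (F 0) := by
    refine hconj (H1 * H2) _ ?_
    intro x
    have : (H1 * H2) x = F x := rfl
    rw [this]
    exact hFrig x
  have hτG : CircleDeg1Lift.translationNumber (H2 * H1) = c.Φ (G' 0) := by
    refine hconj (H2 * H1) _ ?_
    intro x
    have : (H2 * H1) x = G' x := rfl
    rw [this]
    exact hGrig x
  have hττ : CircleDeg1Lift.translationNumber (H1 * H2) =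
      CircleDeg1Lift.translationNumber (H2 * H1) := by
    obtain ⟨u, hu⟩ := hH1U
    rw [← hu]
    exact Cor211.tau_comm u H2
  have hcc : c.Φ (F 0) = c.Φ (G' 0) := by rw [← hτF, ← hτG, hττ]
  have hFG : ∀ x, F x = G' x := by
    intro x
    apply hΦsm.injective
    rw [hFrig x, hGrig x, hcc]
  obtain ⟨x, hx⟩ := hnc 0
  apply hx
  have := hFG x
  rw [hF, hG'] at this
  simp only [] at this
  rw [this]
  push_cast
  ring
end
end

section
/- Every homeomorphism of the circle that commutes with an irrational rotation is itself a rotation. -/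
/-- The ℤ-orbit of an irrational point is dense in the circle. -/
lemma dense_zmultiples_irrational (θ : ℝ) (hθ : Irrational θ) :
    Dense (Set.range fun n : ℤ => n • (θ : AddCircle (1:ℝ))) := by
  set S : AddSubgroup ℝ := AddSubgroup.closure {1, θ} with hS
  have hSdense : Dense (S : Set ℝ) := by
    rcases S.dense_or_cyclic with hd | ⟨a, ha⟩
    · exact hd
    · exfalso
      have h1 : (1:ℝ) ∈ S := AddSubgroup.subset_closure (by simp)
      have h2 : θ ∈ S := AddSubgroup.subset_closure (by simp)
      rw [ha, AddSubgroup.mem_closure_singleton] at h1 h2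
      obtain ⟨m, hm⟩ := h1
      obtain ⟨n, hn⟩ := h2
      have hm0 : (m:ℝ) ≠ 0 := by
        intro h0
        rw [zsmul_eq_mul, h0, zero_mul] at hm
        exact one_ne_zero hm.symm
      apply hθ
      refine ⟨(n : ℚ) / (m : ℚ), ?_⟩
      rw [zsmul_eq_mul] at hm hn
      have ha' : a = 1 / m := by field_simp [eq_comm] at hm ⊢; linarith
      push_cast
      rw [← hn, ha']
      field_simp
  let T : AddSubgroup (AddCircle (1:ℝ)) :=
    (AddSubgroup.zmultiples ((θ : AddCircle (1:ℝ)))).topologicalClosure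
  set P : Set ℝ := ⇑(QuotientAddGroup.mk' (AddSubgroup.zmultiples (1:ℝ))) ⁻¹' (T : Set (AddCircle (1:ℝ))) with hP
  have hPsub : S ≤ AddSubgroup.comap (QuotientAddGroup.mk' (AddSubgroup.zmultiples (1:ℝ))) T := by
    rw [hS, AddSubgroup.closure_le]
    rintro x (rfl | rfl)
    · show ((1:ℝ) : AddCircle (1:ℝ)) ∈ T
      have : ((1:ℝ) : AddCircle (1:ℝ)) = 0 := by
        simp [AddCircle.coe_eq_zero_iff]
      rw [this]; exact T.zero_mem
    · exact AddSubgroup.le_topologicalClosure _ (AddSubgroup.mem_zmultiples _)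
  have hSP : (S : Set ℝ) ⊆ P := fun x hx => hPsub hx
  have hPclosed : IsClosed P :=
    IsClosed.preimage (AddCircle.continuous_mk' 1) (AddSubgroup.isClosed_topologicalClosure _)
  have htop : ∀ x : ℝ, (x : AddCircle (1:ℝ)) ∈ T := by
    intro x
    have : P = Set.univ := by
      have hd := hSdense.mono hSP
      rw [← hPclosed.closure_eq]
      exact hd.closure_eq
    exact Set.eq_univ_iff_forall.mp this x
  intro y
  obtain ⟨x, rfl⟩ := QuotientAddGroup.mk_surjective y
  have hy := htop x
  have hy' : (x : AddCircle (1:ℝ)) ∈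
      _root_.closure ((AddSubgroup.zmultiples ((θ : AddCircle (1:ℝ)))) : Set (AddCircle (1:ℝ))) := by
    rw [← AddSubgroup.topologicalClosure_coe]; exact hy
  have hset : ((AddSubgroup.zmultiples ((θ : AddCircle (1:ℝ)))) : Set (AddCircle (1:ℝ)))
      = Set.range fun n : ℤ => n • (θ : AddCircle (1:ℝ)) := by
    ext z; simp [AddSubgroup.mem_zmultiples_iff, Set.mem_range, eq_comm]
  rwa [hset] at hy'

/-- Every homeomorphism of the circle ℝ/ℤ commuting with an irrational rotation is itself
a rotation. -/
theorem commute_irrational_rotation_is_rotation (θ : ℝ) (hθ : Irrational θ)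
    (h : AddCircle (1:ℝ) ≃ₜ AddCircle (1:ℝ))
    (hcomm : ∀ x : AddCircle (1:ℝ), h (x + (θ : AddCircle (1:ℝ))) = h x + (θ : AddCircle (1:ℝ))) :
    ∃ β : AddCircle (1:ℝ), ∀ x : AddCircle (1:ℝ), h x = x + β := by
  set f : AddCircle (1:ℝ) → AddCircle (1:ℝ) := fun x => h x - x with hf
  have hfc : Continuous f := h.continuous.sub continuous_id
  have hinv : ∀ x, f (x + (θ : AddCircle (1:ℝ))) = f x := by
    intro x; simp only [hf, hcomm x]; abel
  have horb : ∀ n : ℤ, f (n • (θ : AddCircle (1:ℝ))) = f 0 := by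
    intro n
    induction n using Int.induction_on with
    | zero => simp
    | succ k ih => rw [add_zsmul, one_zsmul, hinv, ih]
    | pred k ih =>
        have e : (-(k:ℤ)-1) • (θ : AddCircle (1:ℝ)) + (θ : AddCircle (1:ℝ))
            = (-(k:ℤ)) • (θ : AddCircle (1:ℝ)) := by
          rw [sub_zsmul, one_zsmul]; abel
        have := hinv ((-(k:ℤ)-1) • (θ : AddCircle (1:ℝ)))
        rw [e] at this
        rw [← this, ih]
  have hconst : f = fun _ => f 0 :=
    Continuous.ext_on (dense_zmultiples_irrational θ hθ) hfc continuous_const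
      (by rintro x ⟨n, rfl⟩; exact horb n)
  refine ⟨f 0, fun x => ?_⟩
  have hx : f x = f 0 := congrFun hconst x
  calc h x = x + f x := by simp only [hf]; abel
    _ = x + f 0 := by rw [hx]
end
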